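/- arXiv:1606.07141 — 2 statements merged into one kernel-verified Lean document; each statement's English description precedes it below -/
import Mathlib

section
/- The effective domain D_{ubar I} := {r : ubar I(r) < ∞} of the radial minimum function ubar I is an interval whose interior equals (r_min, r_max). -/
open MeasureTheory Set Filter
open scoped ENNReal NNReal RealInnerProductSpace Topology

noncomputable section

/-- The plane `ℝ²`. -/
abbrev E2 : Type := EuclideanSpace ℝ (Fin 2)

/-- The Laplace transform `𝓛(u) = 𝔼 e^{u·X₁}` of the random vector `X1`. -/
def lapT {Ω : Type*} [MeasurableSpace Ω] (P : Measure Ω) (X1 : Ω → E2) (u : E2) : ℝ :=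
  ∫ ω, Real.exp ⟪u, X1 ω⟫ ∂P

/-- The cumulant generating function `K(u) = log 𝓛(u)`. -/
def cgfT {Ω : Type*} [MeasurableSpace Ω] (P : Measure Ω) (X1 : Ω → E2) (u : E2) : ℝ :=
  Real.log (lapT P X1 u)

/-- The rate function `I = K*`, the Legendre–Fenchel conjugate of `K`.
Since `I ≥ 0` (the value `0 = 0·v - K(0)` is always attained in the supremum),
we may record it as an `ℝ≥0∞`-valued supremum, clamping negatives to `0`. -/
def rateI {Ω : Type*} [MeasurableSpace Ω] (P : Measure Ω) (X1 : Ω → E2) (v : E2) : ℝ≥0∞ :=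
  ⨆ u : E2, ENNReal.ofReal (⟪u, v⟫ - cgfT P X1 u)

/-- The radial minimum function `ubar I (r) = inf_{|ℓ|=1} I(rℓ)`, `+∞` for `r < 0`. -/
def radMin {Ω : Type*} [MeasurableSpace Ω] (P : Measure Ω) (X1 : Ω → E2) (r : ℝ) : ℝ≥0∞ :=
  if r < 0 then ⊤ else ⨅ ℓ ∈ {ℓ : E2 | ‖ℓ‖ = 1}, rateI P X1 (r • ℓ)

/-- The set of minimal directions `ubar Λ_r = argmin_{|ℓ|=1} I(rℓ)`. -/
def minDirs {Ω : Type*} [MeasurableSpace Ω] (P : Measure Ω) (X1 : Ω → E2) (r : ℝ) : Set E2 :=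
  {ℓ : E2 | ‖ℓ‖ = 1 ∧ ∀ ℓ' : E2, ‖ℓ'‖ = 1 → rateI P X1 (r • ℓ) ≤ rateI P X1 (r • ℓ')}

/-- The topological support of a measure on `ℝ²`: the points all of whose open
neighbourhoods have positive measure. -/
def msupp (ν : Measure E2) : Set E2 := {x | ∀ U : Set E2, IsOpen U → x ∈ U → 0 < ν U}

/-- The mean `μ = 𝔼 X₁`. -/
def meanv {Ω : Type*} [MeasurableSpace Ω] (P : Measure Ω) (X1 : Ω → E2) : E2 :=
  ∫ ω, X1 ω ∂P

/-- `r_min = min { |x| : x ∈ conv (supp X₁) }`. -/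
def rmin {Ω : Type*} [MeasurableSpace Ω] (P : Measure Ω) (X1 : Ω → E2) : ℝ :=
  sInf (norm '' (convexHull ℝ (msupp (P.map X1))))

/-- `r_max = max { |x| : x ∈ supp X₁ }`, as an element of `[0,∞]` (possibly `∞`). -/
def rmaxE {Ω : Type*} [MeasurableSpace Ω] (P : Measure Ω) (X1 : Ω → E2) : ℝ≥0∞ :=
  ⨆ y ∈ msupp (P.map X1), (‖y‖₊ : ℝ≥0∞)

/-- Convexity of an `[0,∞]`-valued function on a subset of `ℝ`. -/
def ENNConvexOn (s : Set ℝ) (g : ℝ → ℝ≥0∞) : Prop :=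
  ∀ ⦃x⦄, x ∈ s → ∀ ⦃y⦄, y ∈ s → ∀ a b : ℝ≥0, a + b = 1 →
    g ((a : ℝ) * x + (b : ℝ) * y) ≤ (a : ℝ≥0∞) * g x + (b : ℝ≥0∞) * g y

/-- The largest convex minorant of an `[0,∞]`-valued function on `ℝ`. -/
def convMin (g : ℝ → ℝ≥0∞) (x : ℝ) : ℝ≥0∞ :=
  ⨆ h ∈ {h : ℝ → ℝ≥0∞ | ENNConvexOn Set.univ h ∧ ∀ y, h y ≤ g y}, h x

namespace EffDom

variable {Ω : Type*} [MeasurableSpace Ω]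

lemma isOpen_compl_msupp (ν : Measure E2) : IsOpen (msupp ν)ᶜ := by
  rw [isOpen_iff_forall_mem_open]
  intro x hx
  simp only [msupp, mem_compl_iff, mem_setOf_eq, not_forall] at hx
  obtain ⟨U, hU, hxU, hν⟩ := hx
  refine ⟨U, fun y hyU => ?_, hU, hxU⟩
  simp only [msupp, mem_compl_iff, mem_setOf_eq, not_forall]
  exact ⟨U, hU, hyU, hν⟩

lemma compl_msupp_null (ν : Measure E2) : ν (msupp ν)ᶜ = 0 := by
  classical
  set B := TopologicalSpace.countableBasis E2 with hB
  have hbasis := TopologicalSpace.isBasis_countableBasis E2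
  have hcnt : (TopologicalSpace.countableBasis E2).Countable :=
    TopologicalSpace.countable_countableBasis E2
  have hsub : (msupp ν)ᶜ ⊆ ⋃₀ {U ∈ B | ν U = 0} := by
    intro x hx
    simp only [msupp, mem_compl_iff, mem_setOf_eq, not_forall] at hx
    obtain ⟨U, hU, hxU, hν⟩ := hx
    have hν0 : ν U = 0 := by
      by_contra h
      exact hν (lt_of_le_of_ne zero_le (Ne.symm h))
    obtain ⟨V, hVB, hxV, hVU⟩ := hbasis.exists_subset_of_mem_open hxU hU
    exact ⟨V, ⟨hVB, le_antisymm (le_trans (measure_mono hVU) hν0.le) zero_le⟩, hxV⟩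
  refine measure_mono_null hsub ?_
  rw [measure_sUnion_null_iff (hcnt.mono (sep_subset _ _))]
  exact fun s hs => hs.2

lemma msupp_nonempty (ν : Measure E2) [IsProbabilityMeasure ν] : (msupp ν).Nonempty := by
  by_contra h
  rw [not_nonempty_iff_eq_empty] at h
  have := compl_msupp_null ν
  rw [h, compl_empty] at this
  simp [measure_univ] at this

lemma meas_event (u : E2) (c : ℝ) : MeasurableSet {x : E2 | c ≤ ⟪u, x⟫} :=
  (isClosed_le continuous_const (Continuous.inner continuous_const continuous_id)).measurableSet

lemma rateI_le_of_unif {Ω : Type*} [MeasurableSpace Ω] (P : Measure Ω) [IsProbabilityMeasure P]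
    (X1 : Ω → E2) (hX : Measurable X1)
    (hLap : ∀ u : E2, Integrable (fun ω => Real.exp ⟪u, X1 ω⟫) P)
    {v : E2} {p : ℝ} (hp : 0 < p)
    (hunif : ∀ u : E2, ENNReal.ofReal p ≤ (P.map X1) {x | ⟪u, v⟫ ≤ ⟪u, x⟫}) :
    rateI P X1 v ≤ ENNReal.ofReal (-Real.log p) := by
  refine iSup_le fun u => ?_
  set c : ℝ := ⟪u, v⟫ with hc
  set A : Set Ω := X1 ⁻¹' {x | c ≤ ⟪u, x⟫} with hA
  have hAm : MeasurableSet A := hX (meas_event u c)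
  have hPA : ENNReal.ofReal p ≤ P A := by
    rw [hA, ← Measure.map_apply hX (meas_event u c)]
    exact hunif u
  have hPAle : p ≤ (P A).toReal := by
    rw [← ENNReal.ofReal_le_iff_le_toReal (measure_ne_top P A)]
    exact hPA
  have hint : (P A).toReal * Real.exp c ≤ lapT P X1 u := by
    have h1 : ∫ ω, A.indicator (fun _ => Real.exp c) ω ∂P ≤ lapT P X1 u := by
      refine integral_mono ((integrable_const (Real.exp c)).indicator hAm) (hLap u) ?_
      intro ω
      by_cases hω : ω ∈ A
      · rw [Set.indicator_of_mem hω]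
        exact Real.exp_le_exp.2 hω
      · rw [Set.indicator_of_notMem hω]
        exact (Real.exp_pos _).le
    rwa [integral_indicator_const _ hAm, smul_eq_mul] at h1
  have hlap : p * Real.exp c ≤ lapT P X1 u :=
    le_trans (by nlinarith [Real.exp_pos c, hPAle, hp]) hint
  have hlog : Real.log p + c ≤ cgfT P X1 u := by
    have h0 : (0:ℝ) < p * Real.exp c := by positivity
    calc Real.log p + c = Real.log (p * Real.exp c) := by
          rw [Real.log_mul (ne_of_gt hp) (ne_of_gt (Real.exp_pos c)), Real.log_exp]
      _ ≤ Real.log (lapT P X1 u) := Real.log_le_log h0 hlap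
      _ = cgfT P X1 u := rfl
  exact ENNReal.ofReal_le_ofReal (by linarith)

lemma ae_mem_msupp {Ω : Type*} [MeasurableSpace Ω] (P : Measure Ω)
    (X1 : Ω → E2) (hX : Measurable X1) :
    ∀ᵐ ω ∂P, X1 ω ∈ msupp (P.map X1) := by
  rw [ae_iff]
  have : {ω | ¬ X1 ω ∈ msupp (P.map X1)} = X1 ⁻¹' (msupp (P.map X1))ᶜ := rfl
  rw [this, ← Measure.map_apply hX (isOpen_compl_msupp _).measurableSet]
  exact compl_msupp_null _

lemma mem_closure_of_rateI_ne_top {Ω : Type*} [MeasurableSpace Ω] (P : Measure Ω)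
    [IsProbabilityMeasure P] (X1 : Ω → E2) (hX : Measurable X1)
    (hLap : ∀ u : E2, Integrable (fun ω => Real.exp ⟪u, X1 ω⟫) P)
    {v : E2} (hv : rateI P X1 v ≠ ⊤) :
    v ∈ closure (convexHull ℝ (msupp (P.map X1))) := by
  by_contra hvc
  apply hv
  set S := msupp (P.map X1)
  obtain ⟨f, c, hfc, hcv⟩ := geometric_hahn_banach_closed_point
    ((convex_convexHull ℝ S).closure) isClosed_closure hvc
  set w : E2 := (InnerProductSpace.toDual ℝ E2).symm f with hwdef
  have hw : ∀ y : E2, ⟪w, y⟫ = f y := fun y => InnerProductSpace.toDual_symm_apply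
  have hSbound : ∀ x ∈ S, f x < c := fun x hx =>
    hfc x (subset_closure (subset_convexHull ℝ S hx))
  have key : ∀ t : ℝ, 0 ≤ t →
      ENNReal.ofReal (t * (f v - c)) ≤ rateI P X1 v := by
    intro t ht
    have hlaple : lapT P X1 (t • w) ≤ Real.exp (t * c) := by
      have hae : ∀ᵐ ω ∂P, Real.exp ⟪t • w, X1 ω⟫ ≤ Real.exp (t * c) := by
        filter_upwards [ae_mem_msupp P X1 hX] with ω hω
        have : ⟪t • w, X1 ω⟫ = t * f (X1 ω) := by
          rw [real_inner_smul_left, hw]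
        rw [this]
        exact Real.exp_le_exp.2 (by nlinarith [hSbound _ hω])
      exact le_trans (integral_mono_ae (hLap _) (integrable_const _) hae)
        (by simp [measure_univ])
    have hlappos : 0 < lapT P X1 (t • w) := integral_exp_pos (hLap _)
    have hcgf : cgfT P X1 (t • w) ≤ t * c := by
      have := Real.log_le_log hlappos hlaple
      rwa [Real.log_exp] at this
    have hterm : t * (f v - c) ≤ ⟪t • w, v⟫ - cgfT P X1 (t • w) := by
      have : ⟪t • w, v⟫ = t * f v := by rw [real_inner_smul_left, hw]
      rw [this]; nlinarith
    exact le_trans (ENNReal.ofReal_le_ofReal hterm)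
      (le_iSup (fun u => ENNReal.ofReal (⟪u, v⟫ - cgfT P X1 u)) (t • w))
  refine ENNReal.eq_top_of_forall_nnreal_le fun q => ?_
  have hfcpos : 0 < f v - c := by linarith
  have ht : (0:ℝ) ≤ (q : ℝ) / (f v - c) := by positivity
  have := key _ ht
  rwa [div_mul_cancel₀ _ (ne_of_gt hfcpos), ENNReal.ofReal_coe_nnreal] at this

lemma one_le_of_superset {ν : Measure E2} [IsProbabilityMeasure ν] {G W : Set E2}
    (hGW : G ⊆ W) (hG : ν Gᶜ = 0) : (1:ℝ≥0∞) ≤ ν W := by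
  have h1 : ν Wᶜ = 0 := measure_mono_null (compl_subset_compl.2 hGW) hG
  calc (1:ℝ≥0∞) = ν univ := (measure_univ).symm
    _ ≤ ν W + ν Wᶜ := by rw [← union_compl_self W]; exact measure_union_le _ _
    _ = ν W := by rw [h1, add_zero]

lemma exists_unif (ν : Measure E2) [IsProbabilityMeasure ν]
    {ι : Type*} {t : Finset ι} (ht : t.Nonempty) {z : ι → E2} {w : ι → ℝ} {v : E2}
    (hw : ∀ i ∈ t, 0 < w i) (hw1 : ∑ i ∈ t, w i = 1)
    (hz : ∀ i ∈ t, z i ∈ msupp ν) (hv : ∑ i ∈ t, w i • z i = v)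
    (hsp : ∀ x ∈ msupp ν, x - v ∈ Submodule.span ℝ ((fun i => z i - v) '' ↑t)) :
    ∃ p : ℝ, 0 < p ∧ ∀ u : E2, ENNReal.ofReal p ≤ ν {x | ⟪u, v⟫ ≤ ⟪u, x⟫} := by
  classical
  set V : Submodule ℝ E2 := Submodule.span ℝ ((fun i => z i - v) '' ↑t) with hVdef
  set G : Set E2 := {x | x - v ∈ V} with hGdef
  have hGc : ν Gᶜ = 0 := by
    refine measure_mono_null ?_ (compl_msupp_null ν)
    intro x hx
    exact fun hxS => hx (hsp x hxS)
  have hzero : ∑ i ∈ t, w i • (z i - v) = 0 := by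
    have : ∑ i ∈ t, w i • (z i - v) = (∑ i ∈ t, w i • z i) - (∑ i ∈ t, w i) • v := by
      rw [Finset.sum_smul]
      rw [← Finset.sum_sub_distrib]
      exact Finset.sum_congr rfl fun i _ => smul_sub _ _ _
    rw [this, hv, hw1, one_smul, sub_self]
  by_cases hVbot : V = ⊥
  · refine ⟨1, one_pos, fun u => ?_⟩
    have hsub : G ⊆ {x | ⟪u, v⟫ ≤ ⟪u, x⟫} := by
      intro x hx
      have : x - v ∈ (⊥ : Submodule ℝ E2) := hVbot ▸ hx
      have hxv : x = v := by
        have := Submodule.mem_bot ℝ |>.1 this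
        rwa [sub_eq_zero] at this
      simp [hxv]
    simpa using one_le_of_superset hsub hGc
  · -- nontrivial V : get a compact sphere and minimize
    obtain ⟨θ0, hθ0V, hθ0⟩ := Submodule.exists_mem_ne_zero_of_ne_bot hVbot
    set Q : Set E2 := (V : Set E2) ∩ Metric.sphere 0 1 with hQdef
    have hQne : Q.Nonempty := by
      refine ⟨‖θ0‖⁻¹ • θ0, V.smul_mem _ hθ0V, ?_⟩
      have hn : ‖θ0‖ ≠ 0 := norm_ne_zero_iff.2 hθ0
      simp [norm_smul, abs_of_nonneg (inv_nonneg.2 (norm_nonneg θ0)), inv_mul_cancel₀ hn]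
    have hQcomp : IsCompact Q := by
      refine Metric.isCompact_of_isClosed_isBounded
        ((V.closed_of_finiteDimensional).inter Metric.isClosed_sphere) ?_
      exact Metric.isBounded_sphere.subset inter_subset_right
    set f : E2 → ℝ := fun θ => ∑ i ∈ t, w i * |⟪θ, z i - v⟫| with hfdef
    have hfcont : Continuous f := by
      refine continuous_finset_sum _ fun i _ => ?_
      exact continuous_const.mul ((Continuous.inner continuous_id continuous_const).abs)
    obtain ⟨θm, hθmQ, hmin⟩ := hQcomp.exists_isMinOn hQne hfcont.continuousOn
    set δ : ℝ := f θm with hδdef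
    have hδpos : 0 < δ := by
      rcases lt_or_eq_of_le (Finset.sum_nonneg fun i hi =>
        mul_nonneg (hw i hi).le (abs_nonneg _)) with h | h
      · exact h
      · exfalso
        have hall : ∀ i ∈ t, w i * |⟪θm, z i - v⟫| = 0 :=
          (Finset.sum_eq_zero_iff_of_nonneg fun i hi =>
            mul_nonneg (hw i hi).le (abs_nonneg _)).1 h.symm
        have hinner : ∀ i ∈ t, ⟪θm, z i - v⟫ = 0 := by
          intro i hi
          have := hall i hi
          have hwi := hw i hi
          rcases mul_eq_zero.1 this with h' | h'
          · exact absurd h' (ne_of_gt hwi)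
          · exact abs_eq_zero.1 h'
        have hVle : V ≤ (ℝ ∙ θm)ᗮ := by
          rw [hVdef, Submodule.span_le]
          rintro y ⟨i, hi, rfl⟩
          simp only [SetLike.mem_coe, Submodule.mem_orthogonal]
          intro u hu
          obtain ⟨a, rfl⟩ := Submodule.mem_span_singleton.1 hu
          rw [real_inner_smul_left, hinner i (Finset.mem_coe.1 hi), mul_zero]
        have : ⟪θm, θm⟫ = 0 :=
          (Submodule.mem_orthogonal _ _).1 (hVle hθmQ.1) θm (Submodule.mem_span_singleton_self _)
        have hθm0 : θm = 0 := by
          rwa [real_inner_self_eq_norm_sq, pow_eq_zero_iff (by norm_num), norm_eq_zero] at this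
        have h2 := hθmQ.2
        rw [hθm0] at h2
        simp at h2
    set p : ℝ := min 1 (t.inf' ht fun i => (ν (Metric.ball (z i) (δ/2))).toReal) with hpdef
    have hballpos : ∀ i ∈ t, 0 < ν (Metric.ball (z i) (δ/2)) := fun i hi =>
      hz i hi _ Metric.isOpen_ball (Metric.mem_ball_self (by linarith))
    have hppos : 0 < p :=
      lt_min one_pos ((Finset.lt_inf'_iff ht).2 fun i hi =>
        ENNReal.toReal_pos (hballpos i hi).ne' (measure_ne_top _ _))
    have hpball : ∀ i ∈ t, ENNReal.ofReal p ≤ ν (Metric.ball (z i) (δ/2)) := by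
      intro i hi
      have h1 : p ≤ (ν (Metric.ball (z i) (δ/2))).toReal :=
        le_trans (min_le_right _ _) (Finset.inf'_le _ hi)
      calc ENNReal.ofReal p ≤ ENNReal.ofReal (ν (Metric.ball (z i) (δ/2))).toReal :=
            ENNReal.ofReal_le_ofReal h1
        _ = ν (Metric.ball (z i) (δ/2)) := ENNReal.ofReal_toReal (measure_ne_top _ _)
    refine ⟨p, hppos, fun u => ?_⟩
    set uel := V.orthogonalProjectionOnto u with huel
    set u' : E2 := (uel : E2) with hu'def
    have horth : ∀ x, x ∈ G → ⟪u, x - v⟫ = ⟪u', x - v⟫ := by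
      intro x hx
      have hperp : u - u' ∈ Vᗮ := Submodule.sub_starProjection_mem_orthogonal u
      have := (Submodule.mem_orthogonal' _ _).1 hperp (x - v) hx
      have hsplit : ⟪u, x - v⟫ = ⟪u', x - v⟫ + ⟪u - u', x - v⟫ := by
        rw [← inner_add_left]; norm_num
      rw [hsplit, this, add_zero]
    by_cases hu' : u' = 0
    · have hsub : G ⊆ {x | ⟪u, v⟫ ≤ ⟪u, x⟫} := by
        intro x hx
        have h0 : ⟪u, x - v⟫ = 0 := by rw [horth x hx, hu', inner_zero_left]
        have : ⟪u, x⟫ - ⟪u, v⟫ = 0 := by rwa [← inner_sub_right]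
        simp only [mem_setOf_eq]; linarith
      calc ENNReal.ofReal p ≤ ENNReal.ofReal 1 :=
            ENNReal.ofReal_le_ofReal (min_le_left _ _)
        _ = 1 := by norm_num
        _ ≤ ν {x | ⟪u, v⟫ ≤ ⟪u, x⟫} := one_le_of_superset hsub hGc
    · have hu'V : u' ∈ V := uel.2
      have hn : (0:ℝ) < ‖u'‖ := norm_pos_iff.2 hu'
      set θ : E2 := ‖u'‖⁻¹ • u' with hθdef
      have hθQ : θ ∈ Q := by
        refine ⟨V.smul_mem _ hu'V, ?_⟩
        simp [hθdef, norm_smul, abs_of_nonneg (inv_nonneg.2 hn.le), inv_mul_cancel₀ hn.ne']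
      have hfθ : δ ≤ f θ := hmin hθQ
      have hsum0 : ∑ i ∈ t, w i * ⟪θ, z i - v⟫ = 0 := by
        have : ⟪θ, ∑ i ∈ t, w i • (z i - v)⟫ = ∑ i ∈ t, w i * ⟪θ, z i - v⟫ := by
          rw [inner_sum]
          exact Finset.sum_congr rfl fun i _ => real_inner_smul_right _ _ _
        rw [← this, hzero, inner_zero_right]
      have hex : ∃ j ∈ t, δ/2 ≤ ⟪θ, z j - v⟫ := by
        by_contra h
        push_neg at h
        have key2 : 2 * ∑ i ∈ t, w i * max ⟪θ, z i - v⟫ 0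
            = ∑ i ∈ t, w i * ⟪θ, z i - v⟫ + ∑ i ∈ t, w i * |⟪θ, z i - v⟫| := by
          rw [Finset.mul_sum, ← Finset.sum_add_distrib]
          refine Finset.sum_congr rfl fun i hi => ?_
          rcases le_or_gt 0 (⟪θ, z i - v⟫ : ℝ) with h' | h'
          · rw [max_eq_left h', abs_of_nonneg h']; ring
          · rw [max_eq_right h'.le, abs_of_neg h']; ring
        have hlt : ∑ i ∈ t, w i * max ⟪θ, z i - v⟫ 0 < ∑ i ∈ t, w i * (δ/2) := by
          refine Finset.sum_lt_sum_of_nonempty ht fun i hi => ?_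
          exact mul_lt_mul_of_pos_left (max_lt (h i hi) (by linarith)) (hw i hi)
        have hsummax : ∑ i ∈ t, w i * (δ/2) = δ/2 := by
          rw [← Finset.sum_mul, hw1, one_mul]
        have hfθ' : ∑ i ∈ t, w i * |⟪θ, z i - v⟫| = f θ := rfl
        linarith [hfθ, hsum0]
      obtain ⟨j, hjt, hj⟩ := hex
      have hju' : ‖u'‖ * (δ/2) ≤ ⟪u', z j - v⟫ := by
        have hsc : ⟪θ, z j - v⟫ = ‖u'‖⁻¹ * ⟪u', z j - v⟫ := by
          rw [hθdef, real_inner_smul_left]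
        have := hj
        rw [hsc] at this
        calc ‖u'‖ * (δ/2) ≤ ‖u'‖ * (‖u'‖⁻¹ * ⟪u', z j - v⟫) :=
              mul_le_mul_of_nonneg_left this hn.le
          _ = ⟪u', z j - v⟫ := by field_simp
      have hsub : Metric.ball (z j) (δ/2) ∩ G ⊆ {x | ⟪u, v⟫ ≤ ⟪u, x⟫} := by
        rintro x ⟨hxb, hxG⟩
        have h1 : ⟪u, x - v⟫ = ⟪u', x - v⟫ := horth x hxG
        have h2 : ⟪u', x - v⟫ = ⟪u', z j - v⟫ + ⟪u', x - z j⟫ := by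
          rw [← inner_add_right]
          congr 1
          abel
        have h3 : |⟪u', x - z j⟫| ≤ ‖u'‖ * ‖x - z j‖ := abs_real_inner_le_norm _ _
        have h4 : ‖x - z j‖ < δ/2 := by
          rw [Metric.mem_ball, dist_eq_norm] at hxb
          exact hxb
        have h5 : (0:ℝ) ≤ ⟪u, x - v⟫ := by
          rw [h1, h2]
          have := abs_le.1 h3
          nlinarith
        have : ⟪u, x⟫ - ⟪u, v⟫ = ⟪u, x - v⟫ := (inner_sub_right u x v).symm
        simp only [mem_setOf_eq]
        linarith
      calc ENNReal.ofReal p ≤ ν (Metric.ball (z j) (δ/2)) := hpball j hjt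
        _ ≤ ν (Metric.ball (z j) (δ/2) ∩ G) + ν (Metric.ball (z j) (δ/2) \ G) :=
            measure_le_inter_add_diff _ _ _
        _ = ν (Metric.ball (z j) (δ/2) ∩ G) := by
            rw [measure_mono_null (diff_subset_compl _ _) hGc, add_zero]
        _ ≤ ν {x | ⟪u, v⟫ ≤ ⟪u, x⟫} := measure_mono hsub

lemma radMin_ne_top_iff (P : Measure Ω) (X1 : Ω → E2) (r : ℝ) :
    radMin P X1 r ≠ ⊤ ↔ 0 ≤ r ∧ ∃ ℓ : E2, ‖ℓ‖ = 1 ∧ rateI P X1 (r • ℓ) ≠ ⊤ := by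
  unfold radMin
  by_cases hr : r < 0
  · simp only [if_pos hr]
    exact iff_of_false (by simp) (fun h => by linarith [h.1])
  · simp only [if_neg hr, ne_eq, iInf_eq_top, mem_setOf_eq, not_forall]
    constructor
    · rintro ⟨ℓ, hℓ⟩
      push_neg at hℓ
      exact ⟨not_lt.1 hr, ℓ, hℓ.1, hℓ.2⟩
    · rintro ⟨-, ℓ, h1, h2⟩
      exact ⟨ℓ, by simp [h1, h2]⟩

lemma rmin_nonneg (P : Measure Ω) (X1 : Ω → E2) : 0 ≤ rmin P X1 :=
  Real.sInf_nonneg (by rintro x ⟨y, -, rfl⟩; exact norm_nonneg y)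

lemma rmin_le_norm_of_mem_closure (P : Measure Ω) (X1 : Ω → E2) {v : E2}
    (hv : v ∈ closure (convexHull ℝ (msupp (P.map X1)))) : rmin P X1 ≤ ‖v‖ := by
  refine le_of_forall_pos_le_add fun ε hε => ?_
  obtain ⟨y, hyC, hyd⟩ := Metric.mem_closure_iff.1 hv ε hε
  have h1 : rmin P X1 ≤ ‖y‖ := csInf_le ⟨0, by rintro x ⟨u, -, rfl⟩; exact norm_nonneg u⟩
    ⟨y, hyC, rfl⟩
  have : ‖y‖ ≤ ‖v‖ + ε := by
    have := norm_sub_norm_le y v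
    rw [dist_comm, dist_eq_norm] at hyd
    linarith [hyd, abs_le.1 (abs_norm_sub_norm_le y v)]
  linarith

lemma ofReal_norm_le_rmaxE_of_mem_closure (P : Measure Ω) (X1 : Ω → E2) {v : E2}
    (hv : v ∈ closure (convexHull ℝ (msupp (P.map X1)))) :
    ENNReal.ofReal ‖v‖ ≤ rmaxE P X1 := by
  by_cases htop : rmaxE P X1 = ⊤
  · simp [htop]
  · set R := (rmaxE P X1).toReal with hR
    have hball : msupp (P.map X1) ⊆ Metric.closedBall 0 R := by
      intro y hy
      have h1 : (‖y‖₊ : ℝ≥0∞) ≤ rmaxE P X1 := le_iSup₂ (f := fun y _ => (‖y‖₊ : ℝ≥0∞)) y hy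
      have h2 : ‖y‖ ≤ R := by
        rw [hR]
        rw [← ENNReal.toReal_le_toReal (by simp) htop] at h1
        simpa using h1
      simpa [Metric.mem_closedBall, dist_zero_right] using h2
    have hC : closure (convexHull ℝ (msupp (P.map X1))) ⊆ Metric.closedBall 0 R :=
      closure_minimal (convexHull_min hball (convex_closedBall 0 R)) Metric.isClosed_closedBall
    have hvR : ‖v‖ ≤ R := by simpa [Metric.mem_closedBall, dist_zero_right] using hC hv
    calc ENNReal.ofReal ‖v‖ ≤ ENNReal.ofReal R := ENNReal.ofReal_le_ofReal hvR
      _ = rmaxE P X1 := ENNReal.ofReal_toReal htop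

lemma mem_B_of_mem_D (P : Measure Ω) [IsProbabilityMeasure P] (X1 : Ω → E2)
    (hX : Measurable X1)
    (hLap : ∀ u : E2, Integrable (fun ω => Real.exp ⟪u, X1 ω⟫) P)
    {r : ℝ} (hr : radMin P X1 r ≠ ⊤) :
    rmin P X1 ≤ r ∧ ENNReal.ofReal r ≤ rmaxE P X1 := by
  obtain ⟨hr0, ℓ, hℓ, hfin⟩ := (radMin_ne_top_iff P X1 r).1 hr
  have hcl := mem_closure_of_rateI_ne_top P X1 hX hLap hfin
  have hnorm : ‖r • ℓ‖ = r := by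
    rw [norm_smul, hℓ, mul_one, Real.norm_eq_abs, abs_of_nonneg hr0]
  constructor
  · have := rmin_le_norm_of_mem_closure P X1 hcl
    rwa [hnorm] at this
  · have := ofReal_norm_le_rmaxE_of_mem_closure P X1 hcl
    rwa [hnorm] at this

theorem effective_domain_radMin_interval'
    (P : Measure Ω) [IsProbabilityMeasure P]
    (X1 : Ω → E2) (hX : Measurable X1)
    (hLap : ∀ u : E2, Integrable (fun ω => Real.exp ⟪u, X1 ω⟫) P)
    (hAD : ∀ r : ℝ, rmin P X1 < r → ENNReal.ofReal r < rmaxE P X1 → radMin P X1 r ≠ ⊤) :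
    ({r : ℝ | radMin P X1 r ≠ ⊤}).OrdConnected ∧
      interior {r : ℝ | radMin P X1 r ≠ ⊤} =
        {r : ℝ | rmin P X1 < r ∧ ENNReal.ofReal r < rmaxE P X1} := by
  set D := {r : ℝ | radMin P X1 r ≠ ⊤} with hD
  set A := {r : ℝ | rmin P X1 < r ∧ ENNReal.ofReal r < rmaxE P X1} with hA
  have hAD' : A ⊆ D := fun r hr => hAD r hr.1 hr.2
  have hDB : ∀ r ∈ D, rmin P X1 ≤ r ∧ ENNReal.ofReal r ≤ rmaxE P X1 :=
    fun r hr => mem_B_of_mem_D P X1 hX hLap hr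
  constructor
  · refine ⟨fun x hx y hy z hz => ?_⟩
    rcases eq_or_lt_of_le ((hDB x hx).1.trans hz.1) with heq | hlt
    · -- rmin = z, so x = z
      have : x = z := le_antisymm hz.1 (heq ▸ (hDB x hx).1)
      exact this ▸ hx
    · rcases eq_or_lt_of_le ((ENNReal.ofReal_le_ofReal hz.2).trans (hDB y hy).2) with heq | hlt2
      · -- ofReal z = rmaxE, so z = y
        have h1 : ENNReal.ofReal y ≤ ENNReal.ofReal z := heq ▸ (hDB y hy).2
        have h2 : y ≤ z := by
          rwa [ENNReal.ofReal_le_ofReal_iff (le_trans (rmin_nonneg P X1) (hlt.le))] at h1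
        have : z = y := le_antisymm hz.2 h2
        exact this ▸ hy
      · exact hAD' ⟨hlt, hlt2⟩
  · have hAopen : IsOpen A := by
      have heq : A = {r : ℝ | rmin P X1 < r}
          ∩ ENNReal.ofReal ⁻¹' (Iio (rmaxE P X1)) := rfl
      rw [heq]
      exact (isOpen_lt continuous_const continuous_id).inter
        (IsOpen.preimage ENNReal.continuous_ofReal isOpen_Iio)
    refine subset_antisymm ?_ ?_
    · -- interior D ⊆ A
      intro r hr
      obtain ⟨ε, hε, hball⟩ := Metric.mem_nhds_iff.1 (mem_interior_iff_mem_nhds.1 hr)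
      have hrD : r ∈ D := interior_subset hr
      have hr0 : 0 ≤ r := le_trans (rmin_nonneg P X1) (hDB r hrD).1
      have hm : r - ε/2 ∈ D := hball (by simp [Real.ball_eq_Ioo]; constructor <;> linarith)
      have hp : r + ε/2 ∈ D := hball (by simp [Real.ball_eq_Ioo]; constructor <;> linarith)
      constructor
      · have := (hDB _ hm).1
        linarith
      · have := (hDB _ hp).2
        calc ENNReal.ofReal r < ENNReal.ofReal (r + ε/2) := by
              rw [ENNReal.ofReal_lt_ofReal_iff_of_nonneg hr0]; linarith
          _ ≤ rmaxE P X1 := this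
    · rw [← hAopen.interior_eq]
      exact interior_mono hAD'

lemma span_pair_top {x1 x2 x3 : E2} (h12 : x2 ≠ x1)
    (h3 : x3 - x1 ∉ Submodule.span ℝ {x2 - x1}) :
    Submodule.span ℝ {x2 - x1, x3 - x1} = ⊤ := by
  haveI : Fact (Module.finrank ℝ E2 = 1 + 1) := ⟨by simp [finrank_euclideanSpace]⟩
  have hd1 : x2 - x1 ≠ 0 := sub_ne_zero.2 h12
  rw [← Submodule.orthogonal_eq_bot_iff]
  rw [Submodule.eq_bot_iff]
  intro θ hθ
  by_contra hθ0
  have h1 : ⟪θ, x2 - x1⟫ = 0 := by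
    have := (Submodule.mem_orthogonal' _ _).1 hθ (x2 - x1)
      (Submodule.subset_span (mem_insert _ _))
    exact this
  have h2 : ⟪θ, x3 - x1⟫ = 0 := by
    have := (Submodule.mem_orthogonal' _ _).1 hθ (x3 - x1)
      (Submodule.subset_span (mem_insert_of_mem _ rfl))
    exact this
  set W : Submodule ℝ E2 := (ℝ ∙ θ)ᗮ with hW
  have hmem : ∀ y : E2, ⟪θ, y⟫ = 0 → y ∈ W := by
    intro y hy
    rw [hW, Submodule.mem_orthogonal]
    intro u hu
    obtain ⟨c, rfl⟩ := Submodule.mem_span_singleton.1 hu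
    rw [real_inner_smul_left, hy, mul_zero]
  have hWrank : Module.finrank ℝ W = 1 := Submodule.finrank_orthogonal_span_singleton hθ0
  have hle : (ℝ ∙ (x2 - x1)) ≤ W := by
    rw [Submodule.span_singleton_le_iff_mem]
    exact hmem _ h1
  have heq : (ℝ ∙ (x2 - x1)) = W :=
    Submodule.eq_of_le_of_finrank_eq hle (by rw [finrank_span_singleton hd1, hWrank])
  exact h3 (Submodule.span_mono (by simp) (heq ▸ hmem _ h2) : x3 - x1 ∈ _) |>.elim

lemma triple_of_not_collinear {S : Set E2} (hS : ¬ Collinear ℝ S) :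
    ∃ c1 ∈ S, ∃ c2 ∈ S, ∃ c3 ∈ S,
      Submodule.span ℝ {c2 - c1, c3 - c1} = ⊤ := by
  have hnt : S.Nontrivial := by
    by_contra h
    rw [Set.not_nontrivial_iff] at h
    rcases h.eq_empty_or_singleton with rfl | ⟨x, rfl⟩
    · exact hS (collinear_empty ℝ _)
    · exact hS (collinear_singleton ℝ x)
  obtain ⟨x1, hx1, x2, hx2, hx12⟩ := hnt
  have hex3 : ∃ x3 ∈ S, x3 - x1 ∉ Submodule.span ℝ {x2 - x1} := by
    by_contra h
    push_neg at h
    apply hS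
    rw [collinear_iff_of_mem hx1]
    refine ⟨x2 - x1, fun p hp => ?_⟩
    obtain ⟨c, hc⟩ := Submodule.mem_span_singleton.1 (h p hp)
    exact ⟨c, by rw [hc]; simp⟩
  obtain ⟨x3, hx3S, hx3⟩ := hex3
  exact ⟨x1, hx1, x2, hx2, x3, hx3S, span_pair_top hx12.symm hx3⟩

set_option maxHeartbeats 1000000 in
lemma not_top_of_between (P : Measure Ω) [IsProbabilityMeasure P]
    (X1 : Ω → E2) (hX : Measurable X1)
    (hLap : ∀ u : E2, Integrable (fun ω => Real.exp ⟪u, X1 ω⟫) P)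
    {r : ℝ} (h1 : rmin P X1 < r) (h2 : ENNReal.ofReal r < rmaxE P X1) :
    radMin P X1 r ≠ ⊤ := by
  classical
  haveI : IsProbabilityMeasure (P.map X1) := Measure.isProbabilityMeasure_map hX.aemeasurable
  set ν := P.map X1 with hν
  set S := msupp ν with hS
  have hr0 : 0 < r := lt_of_le_of_lt (rmin_nonneg P X1) h1
  -- get a ∈ convexHull with norm < r
  obtain ⟨x0, hx0⟩ := msupp_nonempty ν
  have hCne : (norm '' (convexHull ℝ S)).Nonempty :=
    ⟨‖x0‖, x0, subset_convexHull ℝ S hx0, rfl⟩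
  have hbdd : BddBelow (norm '' (convexHull ℝ S)) :=
    ⟨0, by rintro x ⟨y, -, rfl⟩; exact norm_nonneg y⟩
  obtain ⟨-, ⟨a, haC, rfl⟩, har⟩ := (csInf_lt_iff hbdd hCne).1 h1
  -- get b ∈ S with r < ‖b‖
  obtain ⟨b, hb⟩ := lt_iSup_iff.1 h2
  have hbS : b ∈ S := by
    by_contra hbs
    exact not_lt_bot (lt_of_lt_of_eq hb (iSup_neg hbs))
  have hbr : r < ‖b‖ := by
    have hb' : ENNReal.ofReal r < ENNReal.ofReal ‖b‖ :=
      lt_of_lt_of_eq hb ((iSup_pos hbS).trans (ofReal_norm b).symm)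
    exact (ENNReal.ofReal_lt_ofReal_iff_of_nonneg hr0.le).1 hb'
  -- Caratheodory-type representation of a
  rw [convexHull_eq] at haC
  obtain ⟨ι, tt, w1, z1, hw10, hw11, hz1, hcm⟩ := haC
  rw [Finset.centerMass_eq_of_sum_1 _ _ hw11] at hcm
  set t1 : Finset ι := tt.filter (fun i => w1 i ≠ 0) with ht1
  have hw1pos : ∀ i ∈ t1, 0 < w1 i := by
    intro i hi
    rw [ht1, Finset.mem_filter] at hi
    exact lt_of_le_of_ne (hw10 i hi.1) (Ne.symm hi.2)
  have hsum1 : ∑ i ∈ t1, w1 i = 1 := by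
    rw [ht1, Finset.sum_filter_ne_zero, hw11]
  have hsumz : ∑ i ∈ t1, w1 i • z1 i = a := by
    rw [ht1, Finset.sum_filter_of_ne, hcm]
    intro i _ hne hw
    exact hne (by rw [hw, zero_smul])
  have hz1S : ∀ i ∈ t1, z1 i ∈ S := fun i hi => hz1 i (Finset.mem_filter.1 hi).1
  have ht1ne : t1.Nonempty := by
    rw [Finset.nonempty_iff_ne_empty]
    intro h
    rw [h, Finset.sum_empty] at hsum1
    norm_num at hsum1
  -- choose the triple c1 c2 c3
  obtain ⟨c1, hc1S, c2, hc2S, c3, hc3S, hcase⟩ :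
      ∃ c1 ∈ S, ∃ c2 ∈ S, ∃ c3 ∈ S,
        Collinear ℝ S ∨ Submodule.span ℝ {c2 - c1, c3 - c1} = ⊤ := by
    by_cases hcol : Collinear ℝ S
    · exact ⟨b, hbS, b, hbS, b, hbS, Or.inl hcol⟩
    · obtain ⟨c1, h1', c2, h2', c3, h3', hsp⟩ := triple_of_not_collinear hcol
      exact ⟨c1, h1', c2, h2', c3, h3', Or.inr hsp⟩
  -- the barycenter shift point
  set cb : E2 := (3:ℝ)⁻¹ • (c1 + c2 + c3) with hcb
  set K : ℝ := ‖a‖ + ‖b‖ + ‖cb‖ + 1 with hK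
  have hKpos : 0 < K := by positivity
  set s : ℝ := min (1/2) (min ((r - ‖a‖)/(2*K)) ((‖b‖ - r)/(2*K))) with hs
  have hs0 : 0 < s := by
    refine lt_min (by norm_num) (lt_min ?_ ?_)
    · exact div_pos (by linarith) (by positivity)
    · exact div_pos (by linarith) (by positivity)
  have hs1 : s < 1 := lt_of_le_of_lt (min_le_left _ _) (by norm_num)
  have hsa : s * K ≤ (r - ‖a‖)/2 := by
    have h' : s ≤ (r - ‖a‖)/(2*K) := le_trans (min_le_right _ _) (min_le_left _ _)
    calc s * K ≤ ((r - ‖a‖)/(2*K)) * K := mul_le_mul_of_nonneg_right h' hKpos.le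
      _ = (r - ‖a‖)/2 := by
          rw [div_mul_eq_mul_div, mul_div_mul_right _ _ hKpos.ne']
  have hsb : s * K ≤ (‖b‖ - r)/2 := by
    have h' : s ≤ (‖b‖ - r)/(2*K) := le_trans (min_le_right _ _) (min_le_right _ _)
    calc s * K ≤ ((‖b‖ - r)/(2*K)) * K := mul_le_mul_of_nonneg_right h' hKpos.le
      _ = (‖b‖ - r)/2 := by
          rw [div_mul_eq_mul_div, mul_div_mul_right _ _ hKpos.ne']
  set A' : E2 := (1-s) • a + s • cb with hA'
  set B' : E2 := (1-s) • b + s • cb with hB'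
  have hA'r : ‖A'‖ < r := by
    have hle : ‖A'‖ ≤ (1-s)*‖a‖ + s*‖cb‖ := by
      calc ‖A'‖ ≤ ‖(1-s) • a‖ + ‖s • cb‖ := norm_add_le _ _
        _ = (1-s)*‖a‖ + s*‖cb‖ := by
            rw [norm_smul, norm_smul, Real.norm_eq_abs, Real.norm_eq_abs,
              abs_of_nonneg (by linarith), abs_of_nonneg hs0.le]
    have hcbK : ‖cb‖ ≤ K := by
      have h0 := norm_nonneg a; have h1 := norm_nonneg b
      rw [hK]; linarith
    nlinarith [norm_nonneg a, norm_nonneg cb, hs0,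
      mul_le_mul_of_nonneg_left hcbK hs0.le, mul_nonneg hs0.le (norm_nonneg a)]
  have hB'r : r < ‖B'‖ := by
    have hbK : ‖b‖ + ‖cb‖ ≤ K := by
      have h0 := norm_nonneg a
      rw [hK]; linarith
    have hlow : (1-s)*‖b‖ - s*‖cb‖ ≤ ‖B'‖ := by
      have h1 : ‖(1-s) • b‖ ≤ ‖B'‖ + ‖s • cb‖ := by
        calc ‖(1-s) • b‖ = ‖B' - s • cb‖ := by rw [hB']; congr 1; abel
          _ ≤ ‖B'‖ + ‖s • cb‖ := norm_sub_le _ _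
      rw [norm_smul, norm_smul, Real.norm_eq_abs, Real.norm_eq_abs,
        abs_of_nonneg (by linarith : (0:ℝ) ≤ 1 - s), abs_of_nonneg hs0.le] at h1
      linarith
    nlinarith [norm_nonneg b, norm_nonneg cb, hs0,
      mul_le_mul_of_nonneg_left hbK hs0.le]
  -- intermediate value theorem to find τ with norm exactly r
  set φ : ℝ → ℝ := fun τ => ‖(1-τ) • A' + τ • B'‖ with hφ
  have hφcont : Continuous φ := by
    apply Continuous.norm
    exact ((continuous_const.sub continuous_id).smul continuous_const).add
      (continuous_id.smul continuous_const)
  have hφ0 : φ 0 = ‖A'‖ := by simp [hφ]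
  have hφ1 : φ 1 = ‖B'‖ := by simp [hφ]
  have hmem : r ∈ φ '' (Ioo 0 1) := by
    apply intermediate_value_Ioo (by norm_num : (0:ℝ) ≤ 1) hφcont.continuousOn
    rw [hφ0, hφ1]
    exact ⟨hA'r, hB'r⟩
  obtain ⟨τ, hτIoo, hτ⟩ := hmem
  obtain ⟨hτ0, hτ1⟩ := hτIoo
  set v : E2 := (1-τ) • A' + τ • B' with hv
  have hvr : ‖v‖ = r := hτ
  -- the finite family
  set z : ι ⊕ Fin 4 → E2 :=
    Sum.elim z1 (fun k => if k = 0 then b else if k = 1 then c1 else if k = 2 then c2 else c3)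
    with hz
  set w : ι ⊕ Fin 4 → ℝ :=
    Sum.elim (fun i => (1-s)*(1-τ)*w1 i) (fun k => if k = 0 then (1-s)*τ else s/3) with hwdef
  set t' : Finset (ι ⊕ Fin 4) := t1.disjSum Finset.univ with ht'
  have ht'ne : t'.Nonempty := by
    obtain ⟨i, hi⟩ := ht1ne
    exact ⟨Sum.inl i, by rw [ht']; exact Finset.inl_mem_disjSum.2 hi⟩
  have hwpos : ∀ j ∈ t', 0 < w j := by
    rintro (i | k) hj
    · rw [ht', Finset.inl_mem_disjSum] at hj
      have := hw1pos i hj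
      have h1 : (0:ℝ) < 1 - s := by linarith
      have h2 : (0:ℝ) < 1 - τ := by linarith
      simp only [hwdef, Sum.elim_inl]
      positivity
    · have h1 : (0:ℝ) < 1 - s := by linarith
      simp only [hwdef, Sum.elim_inr]
      by_cases hk : k = 0
      · rw [if_pos hk]; nlinarith
      · rw [if_neg hk]; positivity
  have hwsum : ∑ j ∈ t', w j = 1 := by
    rw [ht', Finset.sum_disjSum]
    have h1 : ∑ i ∈ t1, w (Sum.inl i) = (1-s)*(1-τ) := by
      simp only [hwdef, Sum.elim_inl]
      rw [← Finset.mul_sum, hsum1, mul_one]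
    have h2 : ∑ k : Fin 4, w (Sum.inr k) = (1-s)*τ + s := by
      simp only [hwdef, Sum.elim_inr]
      rw [Fin.sum_univ_four]
      norm_num [show (1:Fin 4) ≠ 0 from by decide, show (2:Fin 4) ≠ 0 from by decide,
        show (3:Fin 4) ≠ 0 from by decide]
      ring
    rw [h1, h2]; ring
  have hzS : ∀ j ∈ t', z j ∈ S := by
    rintro (i | k) hj
    · rw [ht', Finset.inl_mem_disjSum] at hj
      exact hz1S i hj
    · simp only [hz, Sum.elim_inr]
      by_cases hk0 : k = 0
      · rw [if_pos hk0]; exact hbS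
      · rw [if_neg hk0]
        by_cases hk1 : k = 1
        · rw [if_pos hk1]; exact hc1S
        · rw [if_neg hk1]
          by_cases hk2 : k = 2
          · rw [if_pos hk2]; exact hc2S
          · rw [if_neg hk2]; exact hc3S
  have hsumv : ∑ j ∈ t', w j • z j = v := by
    rw [ht', Finset.sum_disjSum]
    have h1 : ∑ i ∈ t1, w (Sum.inl i) • z (Sum.inl i) = ((1-s)*(1-τ)) • a := by
      simp only [hwdef, hz, Sum.elim_inl]
      rw [← hsumz, Finset.smul_sum]
      refine Finset.sum_congr rfl fun i hi => ?_
      rw [smul_smul]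
    have h2 : ∑ k : Fin 4, w (Sum.inr k) • z (Sum.inr k)
        = ((1-s)*τ) • b + ((s/3) • c1 + (s/3) • c2 + (s/3) • c3) := by
      simp only [hwdef, hz, Sum.elim_inr]
      rw [Fin.sum_univ_four]
      norm_num [show (1:Fin 4) ≠ 0 from by decide, show (2:Fin 4) ≠ 0 from by decide,
        show (3:Fin 4) ≠ 0 from by decide, show (2:Fin 4) ≠ 1 from by decide,
        show (3:Fin 4) ≠ 1 from by decide, show (3:Fin 4) ≠ 2 from by decide]
      abel
    rw [h1, h2, hv, hA', hB', hcb]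
    module
  have hbzv : z (Sum.inr 0) = b := by simp [hz]
  have hbv' : b ≠ v := by
    intro h
    rw [← h] at hvr
    linarith
  have hinr : ∀ k : Fin 4, Sum.inr k ∈ t' := fun k => by
    rw [ht']
    exact Finset.inr_mem_disjSum.2 (Finset.mem_univ _)
  have hbmem : b - v ∈ (fun j => z j - v) '' ↑t' := by
    refine ⟨Sum.inr 0, Finset.mem_coe.2 (hinr 0), ?_⟩
    show z (Sum.inr 0) - v = b - v
    rw [hbzv]
  have hsp : ∀ x ∈ S, x - v ∈ Submodule.span ℝ ((fun j => z j - v) '' ↑t') := by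
    rcases hcase with hcol | htop
    · obtain ⟨p0, dvec, hline⟩ := (collinear_iff_exists_forall_eq_smul_vadd (k := ℝ) S).1 hcol
      have hcoef : ∀ j ∈ t', ∃ c : ℝ, z j = c • dvec +ᵥ p0 := fun j hj => hline _ (hzS j hj)
      choose! cz hcz using hcoef
      set sv : ℝ := ∑ j ∈ t', w j * cz j with hsv
      have hvline : v = sv • dvec + p0 := by
        have step : ∀ j ∈ t', w j • z j = (w j * cz j) • dvec + w j • p0 := by
          intro j hj
          rw [hcz j hj, vadd_eq_add, smul_add, smul_smul]
        calc v = ∑ j ∈ t', w j • z j := hsumv.symm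
          _ = ∑ j ∈ t', ((w j * cz j) • dvec + w j • p0) := Finset.sum_congr rfl step
          _ = (∑ j ∈ t', w j * cz j) • dvec + (∑ j ∈ t', w j) • p0 := by
              rw [Finset.sum_add_distrib, ← Finset.sum_smul, ← Finset.sum_smul]
          _ = sv • dvec + p0 := by rw [hwsum, one_smul, hsv]
      obtain ⟨cbv, hcbv⟩ := hline b hbS
      have hbvd : b - v = (cbv - sv) • dvec := by
        rw [hcbv, hvline, vadd_eq_add, sub_smul]
        abel
      have hcbne : cbv - sv ≠ 0 := by
        intro h
        apply hbv'
        have : b - v = 0 := by rw [hbvd, h, zero_smul]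
        rwa [sub_eq_zero] at this
      intro x hx
      obtain ⟨cx, hcx⟩ := hline x hx
      have hxvd : x - v = (cx - sv) • dvec := by
        rw [hcx, hvline, vadd_eq_add, sub_smul]
        abel
      have : x - v = ((cx - sv)/(cbv - sv)) • (b - v) := by
        rw [hbvd, smul_smul, div_mul_cancel₀ _ hcbne, hxvd]
      rw [this]
      exact Submodule.smul_mem _ _ (Submodule.subset_span (R := ℝ) hbmem)
    · intro x hx
      have hmk : ∀ (k : Fin 4) (c : E2), z (Sum.inr k) = c →
          c - v ∈ (fun j => z j - v) '' ↑t' := by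
        intro k c hkc
        refine ⟨Sum.inr k, Finset.mem_coe.2 (hinr k), ?_⟩
        show z (Sum.inr k) - v = c - v
        rw [hkc]
      have hm1 : c1 - v ∈ (fun j => z j - v) '' ↑t' := by
        refine hmk 1 c1 ?_
        simp [hz, show (1:Fin 4) ≠ 0 from by decide]
      have hm2 : c2 - v ∈ (fun j => z j - v) '' ↑t' := by
        refine hmk 2 c2 ?_
        simp [hz, show (2:Fin 4) ≠ 0 from by decide, show (2:Fin 4) ≠ 1 from by decide]
      have hm3 : c3 - v ∈ (fun j => z j - v) '' ↑t' := by
        refine hmk 3 c3 ?_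
        simp [hz, show (3:Fin 4) ≠ 0 from by decide, show (3:Fin 4) ≠ 1 from by decide,
          show (3:Fin 4) ≠ 2 from by decide]
      have h21 : c2 - c1 ∈ Submodule.span ℝ ((fun j => z j - v) '' ↑t') := by
        have := Submodule.sub_mem _ (Submodule.subset_span (R := ℝ) hm2) (Submodule.subset_span (R := ℝ) hm1)
        simpa using this
      have h31 : c3 - c1 ∈ Submodule.span ℝ ((fun j => z j - v) '' ↑t') := by
        have := Submodule.sub_mem _ (Submodule.subset_span (R := ℝ) hm3) (Submodule.subset_span (R := ℝ) hm1)
        simpa using this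
      have htop' : Submodule.span ℝ ((fun j => z j - v) '' ↑t') = ⊤ := by
        rw [eq_top_iff, ← htop, Submodule.span_le]
        rintro y hy
        rcases hy with rfl | hy
        · exact h21
        · rw [Set.mem_singleton_iff] at hy
          subst hy
          exact h31
      rw [htop']
      trivial
  obtain ⟨p, hppos, hunif⟩ := exists_unif ν ht'ne hwpos hwsum hzS hsumv hsp
  have hfin : rateI P X1 v ≠ ⊤ := by
    have := rateI_le_of_unif P X1 hX hLap hppos hunif
    exact ne_top_of_le_ne_top ENNReal.ofReal_ne_top this
  rw [radMin_ne_top_iff]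
  refine ⟨hr0.le, r⁻¹ • v, ?_, ?_⟩
  · rw [norm_smul, Real.norm_eq_abs, abs_of_nonneg (inv_nonneg.2 hr0.le), hvr,
      inv_mul_cancel₀ hr0.ne']
  · rw [smul_smul, mul_inv_cancel₀ hr0.ne', one_smul]
    exact hfin

end EffDom

/-- The effective domain `D_{ubar I} = {r : ubar I(r) < ∞}` of the radial
minimum function `ubar I` is an interval whose interior equals `(r_min, r_max)`.
(Here `r < r_max` is expressed as `ENNReal.ofReal r < rmaxE`, which also covers `r_max = ∞`.) -/
theorem effective_domain_radMin_interval
    {Ω : Type*} [MeasurableSpace Ω] (P : Measure Ω) [IsProbabilityMeasure P]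
    (X1 : Ω → E2) (hX : Measurable X1)
    (hLap : ∀ u : E2, Integrable (fun ω => Real.exp ⟪u, X1 ω⟫) P) :
    ({r : ℝ | radMin P X1 r ≠ ⊤}).OrdConnected ∧
      interior {r : ℝ | radMin P X1 r ≠ ⊤} =
        {r : ℝ | rmin P X1 < r ∧ ENNReal.ofReal r < rmaxE P X1} := by
  exact EffDom.effective_domain_radMin_interval' P X1 hX hLap
    (fun r h1 h2 => EffDom.not_top_of_between P X1 hX hLap h1 h2)

end
end

section
/- The radial minimum function ubar I is lower semi-continuous on ℝ, satisfies ubar I(|μ|) = 0, is strictly decreasing and convex on [r_min, |μ|], and is strictly increasing on [|μ|, r_max] (where [|μ|, r_max] means [|μ|, ∞) if r_max = ∞). -/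
set_option linter.unusedSectionVars false
set_option linter.unusedVariables false
set_option linter.deprecated false



open MeasureTheory Set Filter
open scoped ENNReal NNReal RealInnerProductSpace Topology

noncomputable section

lemma E2norm_le (x : E2) : ‖x‖ ≤ |x 0| + |x 1| := by
  rw [EuclideanSpace.norm_eq]
  simp only [Fin.sum_univ_two, Real.norm_eq_abs]
  rw [show |x 0| + |x 1| = Real.sqrt ((|x 0| + |x 1|)^2) by
    rw [Real.sqrt_sq (by positivity)]]
  apply Real.sqrt_le_sqrt
  nlinarith [abs_nonneg (x 0), abs_nonneg (x 1), sq_abs (x 0), sq_abs (x 1)]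

lemma abs_le_exp_add (t : ℝ) : |t| ≤ Real.exp t + Real.exp (-t) := by
  rcases abs_cases t with ⟨h, _⟩ | ⟨h, _⟩ <;>
    nlinarith [Real.add_one_le_exp t, Real.add_one_le_exp (-t), Real.exp_pos t,
      Real.exp_pos (-t)]


section Aux
variable {Ω : Type*} [MeasurableSpace Ω] (P : Measure Ω) [IsProbabilityMeasure P]
  (X1 : Ω → E2) (hX : Measurable X1)
  (hLap : ∀ u : E2, Integrable (fun ω => Real.exp ⟪u, X1 ω⟫) P)

include hX hLap



lemma meas_inner (u : E2) : Measurable (fun ω => ⟪u, X1 ω⟫) :=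
  (continuous_const.inner continuous_id).measurable.comp hX

lemma integrable_X1 : Integrable X1 P := by
  have h0 := hLap (EuclideanSpace.single 0 (1:ℝ))
  have h0' := hLap (-EuclideanSpace.single 0 (1:ℝ))
  have h1 := hLap (EuclideanSpace.single 1 (1:ℝ))
  have h1' := hLap (-EuclideanSpace.single 1 (1:ℝ))
  refine Integrable.mono' (((h0.add h0').add h1).add h1') (hX.aestronglyMeasurable) ?_
  filter_upwards with ω
  have e0 : ⟪EuclideanSpace.single (0:Fin 2) (1:ℝ), X1 ω⟫ = X1 ω 0 := by
    simp [EuclideanSpace.inner_single_left]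
  have e1 : ⟪EuclideanSpace.single (1:Fin 2) (1:ℝ), X1 ω⟫ = X1 ω 1 := by
    simp [EuclideanSpace.inner_single_left]
  have := E2norm_le (X1 ω)
  have a0 := abs_le_exp_add (X1 ω 0)
  have a1 := abs_le_exp_add (X1 ω 1)
  simp only [Pi.add_apply, inner_neg_left, e0, e1]
  calc ‖X1 ω‖ ≤ |X1 ω 0| + |X1 ω 1| := this
    _ ≤ _ := by nlinarith

lemma integrable_inner_X1 (u : E2) : Integrable (fun ω => ⟪u, X1 ω⟫) P := by
  have : Integrable (fun ω => ⟪u, X1 ω⟫) P := by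
    simpa using (ContinuousLinearMap.integrable_comp (innerSL ℝ u) (integrable_X1 P X1 hX hLap))
  exact this

omit hX in
lemma lapT_pos (u : E2) : 0 < lapT P X1 u := integral_exp_pos (hLap u)

lemma cgf_ge_inner_mean (u : E2) : ⟪u, meanv P X1⟫ ≤ cgfT P X1 u := by
  set c : ℝ := ⟪u, meanv P X1⟫ with hc
  have hci : c = ∫ ω, ⟪u, X1 ω⟫ ∂P := by
    rw [hc, meanv, ← integral_inner (integrable_X1 P X1 hX hLap)]
  have key : Real.exp c ≤ lapT P X1 u := by
    have hmono : ∫ ω, (Real.exp c + Real.exp c * (⟪u, X1 ω⟫ - c)) ∂P ≤ lapT P X1 u := by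
      refine integral_mono ?_ (hLap u) ?_
      · exact (integrable_const _).add
          (((integrable_inner_X1 P X1 hX hLap u).sub (integrable_const c)).const_mul _)
      · intro ω
        have h := Real.add_one_le_exp (⟪u, X1 ω⟫ - c)
        have : Real.exp c * ((⟪u, X1 ω⟫ - c) + 1) ≤ Real.exp c * Real.exp (⟪u, X1 ω⟫ - c) := by
          exact mul_le_mul_of_nonneg_left h (Real.exp_pos c).le
        rw [← Real.exp_add] at this
        simpa [mul_add, add_comm, sub_add_cancel] using this
    have h2 : Integrable (fun ω => Real.exp c * (⟪u, X1 ω⟫ - c)) P :=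
      (((integrable_inner_X1 P X1 hX hLap u).sub (integrable_const c)).const_mul _)
    have hval : ∫ ω, (Real.exp c + Real.exp c * (⟪u, X1 ω⟫ - c)) ∂P = Real.exp c := by
      rw [integral_add (integrable_const _) h2, integral_const, integral_const_mul,
        integral_sub (integrable_inner_X1 P X1 hX hLap u) (integrable_const c),
        integral_const, ← hci]
      simp
    linarith [hmono, hval.symm.le]
  rw [cgfT, Real.le_log_iff_exp_le (lapT_pos P X1 hLap u)]
  exact key

lemma rateI_mean : rateI P X1 (meanv P X1) = 0 := by
  rw [rateI]
  refine le_antisymm (iSup_le fun u => ?_) zero_le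
  have := cgf_ge_inner_mean P X1 hX hLap u
  simp only [nonpos_iff_eq_zero, ENNReal.ofReal_eq_zero]
  linarith


omit hX hLap

lemma exists_unit : ∃ ℓ : E2, ‖ℓ‖ = 1 :=
  ⟨EuclideanSpace.single 0 (1:ℝ), by simp⟩

lemma radMin_eq (r : ℝ) (hr : 0 ≤ r) :
    radMin P X1 r = ⨅ ℓ ∈ {ℓ : E2 | ‖ℓ‖ = 1}, rateI P X1 (r • ℓ) := if_neg (not_lt.2 hr)

lemma radMin_le (r : ℝ) (hr : 0 ≤ r) {ℓ : E2} (hℓ : ‖ℓ‖ = 1) :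
    radMin P X1 r ≤ rateI P X1 (r • ℓ) := by
  rw [radMin_eq P X1 r hr]
  exact iInf₂_le ℓ hℓ

lemma radMin_le_rateI (v : E2) : radMin P X1 ‖v‖ ≤ rateI P X1 v := by
  rcases eq_or_ne v 0 with rfl | hv
  · obtain ⟨ℓ, hℓ⟩ := exists_unit
    simpa using radMin_le P X1 0 le_rfl hℓ
  · have h1 : ‖(‖v‖⁻¹ • v)‖ = 1 := norm_smul_inv_norm hv
    have h2 : ‖v‖ • (‖v‖⁻¹ • v) = v := by
      rw [smul_smul, mul_inv_cancel₀ (norm_ne_zero_iff.2 hv), one_smul]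
    have := radMin_le P X1 ‖v‖ (norm_nonneg v) h1
    rwa [h2] at this

lemma exists_approx (r : ℝ) (hr : 0 ≤ r) (c : ℝ≥0∞) (h : radMin P X1 r < c) :
    ∃ v : E2, ‖v‖ = r ∧ rateI P X1 v < c := by
  by_contra hcon
  push_neg at hcon
  have : c ≤ radMin P X1 r := by
    rw [radMin_eq P X1 r hr]
    refine le_iInf₂ fun ℓ hℓ => hcon _ ?_
    rw [norm_smul, hℓ, Real.norm_eq_abs, abs_of_nonneg hr, mul_one]
  exact absurd h (not_lt.2 this)

lemma single_le_rateI (v u : E2) :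
    ENNReal.ofReal (⟪u, v⟫ - cgfT P X1 u) ≤ rateI P X1 v := by
  unfold rateI
  exact le_iSup (fun u : E2 => ENNReal.ofReal (⟪u, v⟫ - cgfT P X1 u)) u

lemma rateI_segment (x y : E2) (t : ℝ) (h0 : 0 ≤ t) (h1 : t ≤ 1) :
    rateI P X1 ((1-t) • x + t • y) ≤
      ENNReal.ofReal (1-t) * rateI P X1 x + ENNReal.ofReal t * rateI P X1 y := by
  refine iSup_le fun u => ?_
  have key : ⟪u, (1-t) • x + t • y⟫ - cgfT P X1 u
      = (1-t) * (⟪u, x⟫ - cgfT P X1 u) + t * (⟪u, y⟫ - cgfT P X1 u) := by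
    simp only [inner_add_right, real_inner_smul_right]
    ring
  rw [key]
  calc ENNReal.ofReal ((1-t) * (⟪u, x⟫ - cgfT P X1 u) + t * (⟪u, y⟫ - cgfT P X1 u))
      ≤ ENNReal.ofReal ((1-t) * (⟪u, x⟫ - cgfT P X1 u))
        + ENNReal.ofReal (t * (⟪u, y⟫ - cgfT P X1 u)) := ENNReal.ofReal_add_le
    _ ≤ ENNReal.ofReal (1-t) * rateI P X1 x + ENNReal.ofReal t * rateI P X1 y := by
        rw [ENNReal.ofReal_mul (by linarith), ENNReal.ofReal_mul h0]
        exact add_le_add (mul_le_mul_right (single_le_rateI P X1 x u) _)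
          (mul_le_mul_right (single_le_rateI P X1 y u) _)

end Aux

lemma exp_le_quad (s : ℝ) : Real.exp s ≤ 1 + s + s^2 * (Real.exp s + Real.exp (-s)) := by
  rcases le_or_gt |s| 1 with h | h
  · have hb := Real.exp_bound h (n := 2) (by norm_num)
    have hsum : ∑ i ∈ Finset.range 2, s ^ i / (Nat.factorial i) = 1 + s := by
      simp [Finset.sum_range_succ]
    rw [hsum] at hb
    have habs : Real.exp s - (1 + s) ≤ |s| ^ 2 * (3 / (2 * 2)) := by
      have := abs_le.1 hb
      have h2 : ((2:ℕ).succ : ℝ) / ((Nat.factorial 2) * 2) = 3 / (2 * 2) := by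
        norm_num [Nat.factorial]
      calc Real.exp s - (1 + s) ≤ |Real.exp s - (1+s)| := le_abs_self _
        _ ≤ _ := by rw [← h2]; exact hb
    have h2 : |s| ^ 2 = s ^ 2 := sq_abs s
    nlinarith [Real.add_one_le_exp s, Real.add_one_le_exp (-s), Real.exp_pos s,
      Real.exp_pos (-s), sq_nonneg s]
  · have hs2 : 1 < s ^ 2 := by nlinarith [sq_abs s, abs_nonneg s]
    rcases le_or_gt 0 s with hs | hs
    · nlinarith [Real.exp_pos s, Real.exp_pos (-s)]
    · have hE : Real.exp s ≤ 1 := Real.exp_le_one_iff.2 hs.le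
      have hF : 1 - s ≤ Real.exp (-s) := by
        have := Real.add_one_le_exp (-s); linarith
      have hs1 : s < -1 := by
        rcases abs_cases s with ⟨h1, _⟩ | ⟨h1, _⟩ <;> linarith
      nlinarith [Real.exp_pos s, Real.exp_pos (-s), sq_nonneg s,
        mul_pos (show (0:ℝ) < -s by linarith) (show (0:ℝ) < s^2 - s - 1 by nlinarith)]

lemma sq_le_four_exp (s : ℝ) (hs : 0 ≤ s) : s ^ 2 ≤ 4 * Real.exp s := by
  have h : Real.exp s = Real.exp (s/2) * Real.exp (s/2) := by
    rw [← Real.exp_add]; ring_nf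
  nlinarith [Real.add_one_le_exp (s/2), Real.exp_pos (s/2)]

lemma exp_abs_le (t : ℝ) : Real.exp |t| ≤ Real.exp t + Real.exp (-t) := by
  rcases abs_cases t with ⟨h, _⟩ | ⟨h, _⟩ <;> rw [h] <;>
    nlinarith [Real.exp_pos t, Real.exp_pos (-t)]

section Aux2
variable {Ω : Type*} [MeasurableSpace Ω] (P : Measure Ω) [IsProbabilityMeasure P]
  (X1 : Ω → E2) (hX : Measurable X1)
  (hLap : ∀ u : E2, Integrable (fun ω => Real.exp ⟪u, X1 ω⟫) P)

def u2 (s t : ℝ) : E2 := s • EuclideanSpace.single 0 (1:ℝ) + t • EuclideanSpace.single 1 (1:ℝ)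

lemma inner_u2 (s t : ℝ) (x : E2) : ⟪u2 s t, x⟫ = s * x 0 + t * x 1 := by
  simp [u2, inner_add_left, real_inner_smul_left, EuclideanSpace.inner_single_left]

include hX hLap

lemma integrable_sq_exp :
    Integrable (fun ω => ‖X1 ω‖ ^ 2 * Real.exp ‖X1 ω‖) P := by
  have hg : Integrable (fun ω => 4 * (Real.exp (2 * X1 ω 0 + 2 * X1 ω 1)
      + Real.exp (2 * X1 ω 0 + (-2) * X1 ω 1)
      + Real.exp ((-2) * X1 ω 0 + 2 * X1 ω 1)
      + Real.exp ((-2) * X1 ω 0 + (-2) * X1 ω 1))) P := by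
    have h1 : Integrable (fun ω => Real.exp (2 * X1 ω 0 + 2 * X1 ω 1)) P := by
      simpa [inner_u2] using hLap (u2 2 2)
    have h2 : Integrable (fun ω => Real.exp (2 * X1 ω 0 + (-2) * X1 ω 1)) P := by
      simpa [inner_u2] using hLap (u2 2 (-2))
    have h3 : Integrable (fun ω => Real.exp ((-2) * X1 ω 0 + 2 * X1 ω 1)) P := by
      simpa [inner_u2] using hLap (u2 (-2) 2)
    have h4 : Integrable (fun ω => Real.exp ((-2) * X1 ω 0 + (-2) * X1 ω 1)) P := by
      simpa [inner_u2] using hLap (u2 (-2) (-2))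
    exact (((h1.add h2).add h3).add h4).const_mul 4
  refine Integrable.mono' hg ?_ ?_
  · exact (((continuous_norm.pow 2).mul
      (Real.continuous_exp.comp continuous_norm)).measurable.comp hX).aestronglyMeasurable
  · filter_upwards with ω
    set x := X1 ω
    have h0 : ‖(‖x‖ ^ 2 * Real.exp ‖x‖)‖ = ‖x‖ ^ 2 * Real.exp ‖x‖ := by
      rw [Real.norm_eq_abs, abs_of_nonneg (by positivity)]
    rw [h0]
    have hA : ‖x‖ ^ 2 * Real.exp ‖x‖ ≤ 4 * Real.exp (2 * ‖x‖) := by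
      have := sq_le_four_exp ‖x‖ (norm_nonneg x)
      have h2 : Real.exp (2 * ‖x‖) = Real.exp ‖x‖ * Real.exp ‖x‖ := by
        rw [← Real.exp_add]; ring_nf
      nlinarith [Real.exp_pos ‖x‖]
    have hB : Real.exp (2 * ‖x‖) ≤ Real.exp (2 * |x 0|) * Real.exp (2 * |x 1|) := by
      rw [← Real.exp_add]
      apply Real.exp_le_exp.2
      have := E2norm_le x
      linarith
    have hC : Real.exp (2 * |x 0|) ≤ Real.exp (2 * x 0) + Real.exp (-(2 * x 0)) := by
      simpa [abs_mul, abs_of_nonneg, Real.exp_neg] using exp_abs_le (2 * x 0)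
    have hD : Real.exp (2 * |x 1|) ≤ Real.exp (2 * x 1) + Real.exp (-(2 * x 1)) := by
      simpa [abs_mul] using exp_abs_le (2 * x 1)
    have hprod : Real.exp (2 * |x 0|) * Real.exp (2 * |x 1|)
        ≤ (Real.exp (2 * x 0) + Real.exp (-(2 * x 0)))
          * (Real.exp (2 * x 1) + Real.exp (-(2 * x 1))) := by
      apply mul_le_mul hC hD (Real.exp_pos _).le
      positivity
    have hexp : (Real.exp (2 * x 0) + Real.exp (-(2 * x 0)))
          * (Real.exp (2 * x 1) + Real.exp (-(2 * x 1)))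
        = Real.exp (2 * x 0 + 2 * x 1) + Real.exp (2 * x 0 + (-2) * x 1)
          + Real.exp ((-2) * x 0 + 2 * x 1) + Real.exp ((-2) * x 0 + (-2) * x 1) := by
      rw [add_mul, mul_add, mul_add, ← Real.exp_add, ← Real.exp_add, ← Real.exp_add,
        ← Real.exp_add]
      ring_nf
    nlinarith [hA, hB, hprod, hexp.le, hexp.ge]

omit hX hLap

def Cq : ℝ := 2 * ∫ ω, ‖X1 ω‖ ^ 2 * Real.exp ‖X1 ω‖ ∂P

lemma Cq_nonneg : 0 ≤ Cq P X1 := by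
  have : 0 ≤ ∫ ω, ‖X1 ω‖ ^ 2 * Real.exp ‖X1 ω‖ ∂P :=
    integral_nonneg fun ω => by positivity
  unfold Cq; linarith

def qfun (d : ℝ) : ℝ := min 1 (d / (2 * (Cq P X1 + 1))) * d / 2

lemma qfun_mono {a b : ℝ} (ha : 0 ≤ a) (hab : a ≤ b) : qfun P X1 a ≤ qfun P X1 b := by
  have hC := Cq_nonneg P X1
  have h1 : min 1 (a / (2 * (Cq P X1 + 1))) ≤ min 1 (b / (2 * (Cq P X1 + 1))) := by
    have hden : (0:ℝ) < 2 * (Cq P X1 + 1) := by linarith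
    gcongr
  have h2 : 0 ≤ min 1 (a / (2 * (Cq P X1 + 1))) := le_min zero_le_one (by positivity)
  unfold qfun
  have := mul_le_mul h1 hab ha (le_trans h2 h1)
  linarith

include hX hLap

lemma cgf_upper (w : E2) (hw : ‖w‖ = 1) (t : ℝ) (h0 : 0 ≤ t) (h1 : t ≤ 1) :
    cgfT P X1 (t • w) ≤ t * ⟪w, meanv P X1⟫ + t ^ 2 * Cq P X1 := by
  have hY : Integrable (fun ω => ⟪w, X1 ω⟫) P := integrable_inner_X1 P X1 hX hLap w
  have hG := integrable_sq_exp P X1 hX hLap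
  have hpt : ∀ ω, Real.exp (t * ⟪w, X1 ω⟫)
      ≤ 1 + t * ⟪w, X1 ω⟫ + t ^ 2 * (2 * (‖X1 ω‖ ^ 2 * Real.exp ‖X1 ω‖)) := by
    intro ω
    set x := X1 ω
    set s := t * ⟪w, x⟫ with hs
    have hq := exp_le_quad s
    have hYx : |⟪w, x⟫| ≤ ‖x‖ := by
      have := abs_real_inner_le_norm w x
      rwa [hw, one_mul] at this
    have hsx : |s| ≤ ‖x‖ := by
      rw [hs, abs_mul, abs_of_nonneg h0]
      nlinarith [mul_le_mul h1 hYx (abs_nonneg (⟪w, x⟫ : ℝ)) zero_le_one, norm_nonneg x]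
    have he1 : Real.exp s ≤ Real.exp ‖x‖ := Real.exp_le_exp.2 (le_trans (le_abs_self s) hsx)
    have he2 : Real.exp (-s) ≤ Real.exp ‖x‖ := Real.exp_le_exp.2 (le_trans (neg_le_abs s) hsx)
    have hsq : s ^ 2 ≤ t ^ 2 * ‖x‖ ^ 2 := by
      rw [hs, mul_pow]
      have : ⟪w, x⟫ ^ 2 ≤ ‖x‖ ^ 2 := by nlinarith [abs_nonneg ⟪w, x⟫, sq_abs ⟪w, x⟫]
      nlinarith [sq_nonneg t]
    have hmain : s ^ 2 * (Real.exp s + Real.exp (-s))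
        ≤ t ^ 2 * (2 * (‖x‖ ^ 2 * Real.exp ‖x‖)) := by
      have hs2 : (0:ℝ) ≤ s ^ 2 := sq_nonneg s
      have hee : Real.exp s + Real.exp (-s) ≤ 2 * Real.exp ‖x‖ := by linarith
      calc s ^ 2 * (Real.exp s + Real.exp (-s)) ≤ s ^ 2 * (2 * Real.exp ‖x‖) :=
            mul_le_mul_of_nonneg_left hee hs2
        _ ≤ t ^ 2 * ‖x‖ ^ 2 * (2 * Real.exp ‖x‖) :=
            mul_le_mul_of_nonneg_right hsq (by positivity)
        _ = t ^ 2 * (2 * (‖x‖ ^ 2 * Real.exp ‖x‖)) := by ring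
    linarith [hq]
  have hint2 : Integrable (fun ω => t * ⟪w, X1 ω⟫) P := hY.const_mul t
  have hint3 : Integrable (fun ω => t ^ 2 * (2 * (‖X1 ω‖ ^ 2 * Real.exp ‖X1 ω‖))) P :=
    (hG.const_mul 2).const_mul (t ^ 2)
  have hlap_eq : lapT P X1 (t • w) = ∫ ω, Real.exp (t * ⟪w, X1 ω⟫) ∂P := by
    unfold lapT
    congr 1
    funext ω
    rw [real_inner_smul_left]
  have hlap : lapT P X1 (t • w) ≤ 1 + t * ⟪w, meanv P X1⟫ + t ^ 2 * Cq P X1 := by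
    rw [hlap_eq]
    have hm : ∫ ω, Real.exp (t * ⟪w, X1 ω⟫) ∂P
        ≤ ∫ ω, (1 + t * ⟪w, X1 ω⟫ + t ^ 2 * (2 * (‖X1 ω‖ ^ 2 * Real.exp ‖X1 ω‖))) ∂P := by
      have hi1 : Integrable (fun ω : Ω => (1:ℝ) + t * ⟪w, X1 ω⟫) P := by
        exact (integrable_const 1).add hint2
      have hi2 : Integrable
          (fun ω : Ω => (1:ℝ) + t * ⟪w, X1 ω⟫ + t ^ 2 * (2 * (‖X1 ω‖ ^ 2 * Real.exp ‖X1 ω‖))) P := by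
        exact hi1.add hint3
      refine integral_mono ?_ hi2 fun ω => hpt ω
      have := hLap (t • w)
      have heq : (fun ω => Real.exp ⟪t • w, X1 ω⟫) = fun ω => Real.exp (t * ⟪w, X1 ω⟫) := by
        funext ω; rw [real_inner_smul_left]
      rwa [heq] at this
    have hval : ∫ ω, (1 + t * ⟪w, X1 ω⟫ + t ^ 2 * (2 * (‖X1 ω‖ ^ 2 * Real.exp ‖X1 ω‖))) ∂P
        = 1 + t * ⟪w, meanv P X1⟫ + t ^ 2 * Cq P X1 := by
      have hi1 : Integrable (fun ω : Ω => (1:ℝ) + t * ⟪w, X1 ω⟫) P := by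
        exact (integrable_const 1).add hint2
      rw [integral_add hi1 hint3,
        integral_add (integrable_const 1) hint2, integral_const, integral_const_mul,
        integral_const_mul, integral_const_mul]
      have h1 : ∫ ω, ⟪w, X1 ω⟫ ∂P = ⟪w, meanv P X1⟫ := by
        rw [meanv, integral_inner (integrable_X1 P X1 hX hLap)]
      rw [h1]
      simp [Cq]
    linarith
  have hpos := lapT_pos P X1 hLap (t • w)
  calc cgfT P X1 (t • w) ≤ lapT P X1 (t • w) - 1 := Real.log_le_sub_one_of_pos hpos
    _ ≤ t * ⟪w, meanv P X1⟫ + t ^ 2 * Cq P X1 := by linarith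

lemma rateI_lower (v : E2) :
    ENNReal.ofReal (qfun P X1 ‖v - meanv P X1‖) ≤ rateI P X1 v := by
  rcases eq_or_ne v (meanv P X1) with rfl | hv
  · simp [qfun]
  · set μ := meanv P X1
    set d := ‖v - μ‖ with hd
    have hd0 : 0 < d := by
      rw [hd]; exact norm_pos_iff.2 (sub_ne_zero.2 hv)
    have hC := Cq_nonneg P X1
    set C1 := 2 * (Cq P X1 + 1) with hC1
    have hC1pos : 0 < C1 := by rw [hC1]; linarith
    set t := min 1 (d / C1) with ht
    have ht0 : 0 < t := lt_min one_pos (div_pos hd0 hC1pos)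
    have ht1 : t ≤ 1 := min_le_left _ _
    set w := d⁻¹ • (v - μ) with hw
    have hwn : ‖w‖ = 1 := by
      rw [hw]; exact norm_smul_inv_norm (sub_ne_zero.2 hv)
    have hinner : ⟪w, v⟫ - ⟪w, μ⟫ = d := by
      rw [hw, ← inner_sub_right, real_inner_smul_left, real_inner_self_eq_norm_sq, ← hd]
      field_simp
    have hcgf := cgf_upper P X1 hX hLap w hwn t ht0.le ht1
    have hkey : qfun P X1 d ≤ ⟪t • w, v⟫ - cgfT P X1 (t • w) := by
      rw [real_inner_smul_left]
      have h2 : t ^ 2 * Cq P X1 ≤ t * d / 2 := by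
        have htd : t ≤ d / C1 := min_le_right _ _
        have : t * Cq P X1 ≤ (d / C1) * Cq P X1 :=
          mul_le_mul_of_nonneg_right htd hC
        have h3 : (d / C1) * Cq P X1 ≤ d / 2 := by
          rw [hC1, div_mul_eq_mul_div, div_le_div_iff₀ (by linarith) (by norm_num)]
          nlinarith
        calc t ^ 2 * Cq P X1 = t * (t * Cq P X1) := by ring
          _ ≤ t * (d / 2) := by
              apply mul_le_mul_of_nonneg_left _ ht0.le
              linarith
          _ = t * d / 2 := by ring
      have hq : qfun P X1 d = t * d / 2 := by rw [qfun, ht, hC1]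
      nlinarith [hcgf, hinner]
    calc ENNReal.ofReal (qfun P X1 d) ≤ ENNReal.ofReal (⟪t • w, v⟫ - cgfT P X1 (t • w)) :=
          ENNReal.ofReal_le_ofReal hkey
      _ ≤ rateI P X1 v := single_le_rateI P X1 v _

lemma radMin_pos (r : ℝ) (hr : 0 ≤ r) (hne : r ≠ ‖meanv P X1‖) :
    0 < radMin P X1 r := by
  set μ := meanv P X1
  have habs : 0 < |r - ‖μ‖| := abs_pos.2 (sub_ne_zero.2 hne)
  have hq : 0 < qfun P X1 |r - ‖μ‖| := by
    have hC := Cq_nonneg P X1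
    rw [qfun]
    have : 0 < min 1 (|r - ‖μ‖| / (2 * (Cq P X1 + 1))) :=
      lt_min one_pos (div_pos habs (by linarith))
    positivity
  refine lt_of_lt_of_le (ENNReal.ofReal_pos.2 hq) ?_
  rw [radMin_eq P X1 r hr]
  refine le_iInf₂ fun ℓ hℓ => ?_
  refine le_trans ?_ (rateI_lower P X1 hX hLap (r • ℓ))
  apply ENNReal.ofReal_le_ofReal
  apply qfun_mono P X1 habs.le
  have h1 : ‖r • ℓ‖ = r := by
    rw [norm_smul, Real.norm_eq_abs, abs_of_nonneg hr, hℓ, mul_one]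
  calc |r - ‖μ‖| = |‖r • ℓ‖ - ‖μ‖| := by rw [h1]
    _ ≤ ‖r • ℓ - μ‖ := abs_norm_sub_norm_le _ _

lemma radMin_mean : radMin P X1 ‖meanv P X1‖ = 0 := by
  refine le_antisymm ?_ zero_le
  calc radMin P X1 ‖meanv P X1‖ ≤ rateI P X1 (meanv P X1) :=
        radMin_le_rateI P X1 (meanv P X1)
    _ = 0 := rateI_mean P X1 hX hLap

end Aux2


lemma msupp_compl_null (ν : Measure E2) : ν ((msupp ν)ᶜ) = 0 := by
  apply measure_null_of_locally_null
  intro x hx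
  simp only [msupp, mem_compl_iff, mem_setOf_eq, not_forall] at hx
  obtain ⟨U, hUopen, hxU, hU⟩ := hx
  exact ⟨U, mem_nhdsWithin_of_mem_nhds (hUopen.mem_nhds hxU), le_antisymm (not_lt.1 hU) zero_le⟩

lemma msupp_meas (ν : Measure E2) : MeasurableSet (msupp ν) := by
  have : IsOpen (msupp ν)ᶜ := by
    rw [isOpen_iff_forall_mem_open]
    intro x hx
    simp only [msupp, mem_compl_iff, mem_setOf_eq, not_forall] at hx
    obtain ⟨U, hUopen, hxU, hU⟩ := hx
    refine ⟨U, fun y hy => ?_, hUopen, hxU⟩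
    simp only [msupp, mem_compl_iff, mem_setOf_eq, not_forall]
    exact ⟨U, hUopen, hy, hU⟩
  simpa using this.isClosed_compl.measurableSet

section Aux3
variable {Ω : Type*} [MeasurableSpace Ω] (P : Measure Ω) [IsProbabilityMeasure P]
  (X1 : Ω → E2) (hX : Measurable X1)
  (hLap : ∀ u : E2, Integrable (fun ω => Real.exp ⟪u, X1 ω⟫) P)

include hX

lemma ae_mem_msupp : ∀ᵐ ω ∂P, X1 ω ∈ msupp (P.map X1) := by
  have h1 : P (X1 ⁻¹' (msupp (P.map X1))ᶜ) = 0 := by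
    rw [← Measure.map_apply hX (msupp_meas _).compl]
    exact msupp_compl_null _
  rw [ae_iff]
  exact h1

lemma msupp_subset_of_ae {H : Set E2} (hH : IsClosed H) (hae : ∀ᵐ ω ∂P, X1 ω ∈ H) :
    msupp (P.map X1) ⊆ H := by
  intro x hx
  by_contra hxH
  have hpos : 0 < (P.map X1) Hᶜ := hx Hᶜ hH.isOpen_compl hxH
  have : P.map X1 Hᶜ = 0 := by
    rw [Measure.map_apply hX hH.measurableSet.compl]
    rw [ae_iff] at hae
    exact hae
  simp [this] at hpos

lemma ball_pos (x : E2) (hx : x ∈ msupp (P.map X1)) (δ : ℝ) (hδ : 0 < δ) :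
    0 < ((P.map X1) (Metric.ball x δ)).toReal := by
  have h1 : 0 < (P.map X1) (Metric.ball x δ) :=
    hx _ Metric.isOpen_ball (Metric.mem_ball_self hδ)
  have : IsProbabilityMeasure (P.map X1) := Measure.isProbabilityMeasure_map hX.aemeasurable
  exact ENNReal.toReal_pos h1.ne' (measure_ne_top _ _)

include hLap

lemma cgf_restrict (u x : E2) (δ : ℝ) (hδ : 0 < δ) (hx : x ∈ msupp (P.map X1)) :
    Real.log (((P.map X1) (Metric.ball x δ)).toReal) + (⟪u, x⟫ - ‖u‖ * δ)
      ≤ cgfT P X1 u := by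
  set p := ((P.map X1) (Metric.ball x δ)).toReal with hp
  have hppos : 0 < p := ball_pos P X1 hX x hx δ hδ
  set A := X1 ⁻¹' Metric.ball x δ with hA
  have hAm : MeasurableSet A := hX Metric.isOpen_ball.measurableSet
  have hPA : (P A).toReal = p := by
    rw [hp, Measure.map_apply hX Metric.isOpen_ball.measurableSet]
  have h1 : ∀ ω ∈ A, Real.exp (⟪u, x⟫ - ‖u‖ * δ) ≤ Real.exp ⟪u, X1 ω⟫ := by
    intro ω hω
    apply Real.exp_le_exp.2
    have hd : ‖x - X1 ω‖ ≤ δ := by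
      have := Metric.mem_ball.1 hω
      rw [dist_eq_norm] at this
      rw [norm_sub_rev]
      linarith
    have hi : ⟪u, x - X1 ω⟫ ≤ ‖u‖ * δ := by
      calc ⟪u, x - X1 ω⟫ ≤ ‖u‖ * ‖x - X1 ω‖ := real_inner_le_norm u _
        _ ≤ ‖u‖ * δ := mul_le_mul_of_nonneg_left hd (norm_nonneg u)
    rw [inner_sub_right] at hi
    linarith
  have h2 : p * Real.exp (⟪u, x⟫ - ‖u‖ * δ) ≤ ∫ ω in A, Real.exp ⟪u, X1 ω⟫ ∂P := by
    have := setIntegral_mono_on (integrableOn_const (measure_ne_top P A))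
      ((hLap u).integrableOn) hAm h1
    rwa [setIntegral_const, measureReal_def, hPA, smul_eq_mul] at this
  have h3 : ∫ ω in A, Real.exp ⟪u, X1 ω⟫ ∂P ≤ lapT P X1 u :=
    setIntegral_le_integral (hLap u) (ae_of_all _ fun ω => (Real.exp_pos _).le)
  have h4 : p * Real.exp (⟪u, x⟫ - ‖u‖ * δ) ≤ lapT P X1 u := le_trans h2 h3
  have h5 : Real.log (p * Real.exp (⟪u, x⟫ - ‖u‖ * δ)) ≤ cgfT P X1 u :=
    Real.log_le_log (by positivity) h4
  rwa [Real.log_mul hppos.ne' (Real.exp_ne_zero _), Real.log_exp] at h5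

end Aux3

section Aux4
variable {Ω : Type*} [MeasurableSpace Ω] (P : Measure Ω) [IsProbabilityMeasure P]
  (X1 : Ω → E2) (hX : Measurable X1)
  (hLap : ∀ u : E2, Integrable (fun ω => Real.exp ⟪u, X1 ω⟫) P)

def Msub : Submodule ℝ E2 where
  carrier := {u : E2 | ∀ᵐ ω ∂P, ⟪u, X1 ω - meanv P X1⟫ = 0}
  zero_mem' := ae_of_all _ fun ω => inner_zero_left _
  add_mem' := by
    intro a b ha hb
    simp only [Set.mem_setOf_eq] at ha hb ⊢
    filter_upwards [ha, hb] with ω h1 h2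
    rw [inner_add_left, h1, h2, add_zero]
  smul_mem' := by
    intro c a ha
    simp only [Set.mem_setOf_eq] at ha ⊢
    filter_upwards [ha] with ω h1
    rw [real_inner_smul_left, h1, mul_zero]

lemma mem_Msub {u : E2} :
    u ∈ Msub P X1 ↔ ∀ᵐ ω ∂P, ⟪u, X1 ω - meanv P X1⟫ = 0 := Iff.rfl

include hX hLap

lemma rateI_lt_top (w : E2) (hw : w ∈ convexHull ℝ (msupp (P.map X1)))
    (t : ℝ) (ht0 : 0 < t) (ht1 : t ≤ 1) :
    rateI P X1 ((1 - t) • w + t • meanv P X1) < ⊤ := by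
  set μ := meanv P X1 with hμ
  set v := (1 - t) • w + t • μ with hv
  set M := Msub P X1 with hM
  -- reduction of each `u` to its component orthogonal to M
  have hGproj : ∀ u : E2, ⟪u, v⟫ - cgfT P X1 u
      = ⟪u - (M.orthogonalProjection u : E2), v⟫
        - cgfT P X1 (u - (M.orthogonalProjection u : E2)) := by
    intro u
    set q : E2 := (M.orthogonalProjection u : E2) with hq
    have hqM : q ∈ M := SetLike.coe_mem _
    have hqa : ∀ᵐ ω ∂P, ⟪q, X1 ω⟫ = ⟪q, μ⟫ := by
      filter_upwards [(mem_Msub P X1).1 hqM] with ω h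
      rw [inner_sub_right] at h
      linarith
    have hKq : lapT P X1 u = Real.exp ⟪q, μ⟫ * lapT P X1 (u - q) := by
      unfold lapT
      rw [← integral_const_mul]
      apply integral_congr_ae
      filter_upwards [hqa] with ω h
      rw [← Real.exp_add, inner_sub_left, h]
      ring_nf
    have hcgf : cgfT P X1 u = ⟪q, μ⟫ + cgfT P X1 (u - q) := by
      unfold cgfT
      rw [hKq, Real.log_mul (Real.exp_ne_zero _) (lapT_pos P X1 hLap (u - q)).ne',
        Real.log_exp]
    have hqv : ⟪q, v⟫ = ⟪q, μ⟫ := by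
      have hH : msupp (P.map X1) ⊆ {x : E2 | ⟪q, x - μ⟫ = 0} := by
        apply msupp_subset_of_ae P X1 hX
        · have : Continuous fun x : E2 => ⟪q, x - μ⟫ :=
            continuous_const.inner (continuous_id.sub continuous_const)
          exact isClosed_eq this continuous_const
        · exact (mem_Msub P X1).1 hqM
      have hconv : Convex ℝ {x : E2 | ⟪q, x - μ⟫ = 0} := by
        intro x hx y hy a b ha hb hab
        simp only [mem_setOf_eq, inner_sub_right] at hx hy ⊢
        rw [inner_add_right, real_inner_smul_right, real_inner_smul_right]
        linear_combination a * hx + b * hy + (inner ℝ q μ : ℝ) * hab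
      have hwH : ⟪q, w - μ⟫ = 0 := convexHull_min hH hconv hw
      have hvμ : v - μ = (1 - t) • (w - μ) := by
        rw [hv, smul_sub]
        module
      have : ⟪q, v - μ⟫ = 0 := by
        rw [hvμ, real_inner_smul_right, hwH, mul_zero]
      rw [inner_sub_right] at this
      linarith
    rw [hcgf, inner_sub_left]
    linarith [hqv]
  -- every unit vector orthogonal to M sees a support point strictly beyond v
  have hdir : ∀ θ : E2, θ ∈ Mᗮ → ‖θ‖ = 1 → ∃ x ∈ msupp (P.map X1), 0 < ⟪θ, x - v⟫ := by
    intro θ hθO hθn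
    by_contra hcon
    push_neg at hcon
    have hsupp_half : msupp (P.map X1) ⊆ {x : E2 | ⟪θ, x⟫ ≤ ⟪θ, v⟫} := by
      intro x hx
      have := hcon x hx
      rw [inner_sub_right] at this
      simp only [mem_setOf_eq]
      linarith
    have hae : ∀ᵐ ω ∂P, ⟪θ, X1 ω⟫ ≤ ⟪θ, v⟫ := by
      filter_upwards [ae_mem_msupp P X1 hX] with ω h using hsupp_half h
    have hintθ := integrable_inner_X1 P X1 hX hLap θ
    have hθμ : ∫ ω, ⟪θ, X1 ω⟫ ∂P = ⟪θ, μ⟫ := by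
      rw [hμ, meanv, integral_inner (integrable_X1 P X1 hX hLap)]
    have hμv : ⟪θ, μ⟫ ≤ ⟪θ, v⟫ := by
      have h2 : ∫ ω, ⟪θ, X1 ω⟫ ∂P ≤ ∫ _ω, (⟪θ, v⟫ : ℝ) ∂P :=
        integral_mono_ae hintθ (integrable_const _) hae
      rw [integral_const, probReal_univ, one_smul, hθμ] at h2
      exact h2
    have hwv : ⟪θ, w⟫ ≤ ⟪θ, v⟫ := by
      have hcv : Convex ℝ {x : E2 | ⟪θ, x⟫ ≤ ⟪θ, v⟫} :=
        convex_halfSpace_le ⟨fun a b => inner_add_right θ a b,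
          fun c a => real_inner_smul_right θ a c⟩ _
      exact convexHull_min hsupp_half hcv hw
    have hveq : ⟪θ, v⟫ = (1 - t) * ⟪θ, w⟫ + t * ⟪θ, μ⟫ := by
      rw [hv, inner_add_right, real_inner_smul_right, real_inner_smul_right]
    have hμeq : ⟪θ, μ⟫ = ⟪θ, v⟫ := by nlinarith
    have hnn : 0 ≤ᵐ[P] fun ω => ⟪θ, v⟫ - ⟪θ, X1 ω⟫ :=
      hae.mono fun ω h => by simp only [Pi.zero_apply]; linarith
    have hintsub : Integrable (fun ω => ⟪θ, v⟫ - ⟪θ, X1 ω⟫) P :=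
      (integrable_const _).sub hintθ
    have hzero : ∫ ω, (⟪θ, v⟫ - ⟪θ, X1 ω⟫) ∂P = 0 := by
      rw [integral_sub (integrable_const _) hintθ, integral_const, probReal_univ,
         one_smul, hθμ, hμeq]
      ring
    have hZ := (integral_eq_zero_iff_of_nonneg_ae hnn hintsub).1 hzero
    have hθM : θ ∈ M := by
      rw [hM, mem_Msub]
      filter_upwards [hZ] with ω h
      simp only [Pi.zero_apply] at h
      rw [inner_sub_right, ← hμ, hμeq]
      linarith
    have hzero' : θ = 0 := by
      have := (Submodule.mem_orthogonal M θ).1 hθO θ hθM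
      exact inner_self_eq_zero.1 this
    rw [hzero'] at hθn
    simp at hθn
  -- compactness of the unit sphere of Mᗮ
  set S : Set E2 := {θ : E2 | θ ∈ Mᗮ ∧ ‖θ‖ = 1} with hS
  have hScomp : IsCompact S := by
    have hSeq : S = (Mᗮ : Set E2) ∩ Metric.sphere 0 1 := by
      ext θ
      simp [hS, mem_sphere_zero_iff_norm, SetLike.mem_coe]
    rw [hSeq]
    exact (isCompact_sphere 0 1).inter_left (Submodule.closed_of_finiteDimensional Mᗮ)
  have hchoice : ∀ θ : S, ∃ x : E2, x ∈ msupp (P.map X1) ∧ 0 < ⟪(θ : E2), x - v⟫ := by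
    rintro ⟨θ, hθ⟩
    obtain ⟨x, hx1, hx2⟩ := hdir θ hθ.1 hθ.2
    exact ⟨x, hx1, hx2⟩
  choose xes hxmem hxpos using hchoice
  set γ : S → ℝ := fun θ => ⟪(θ : E2), xes θ - v⟫ with hγ
  set U : S → Set E2 := fun θ => {θ' : E2 | γ θ / 2 < ⟪θ', xes θ - v⟫} with hU
  have hUopen : ∀ θ : S, IsOpen (U θ) := by
    intro θ
    exact isOpen_lt continuous_const (continuous_id.inner continuous_const)
  have hcover : S ⊆ ⋃ θ : S, U θ := by
    intro θ' hθ'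
    refine mem_iUnion.2 ⟨⟨θ', hθ'⟩, ?_⟩
    simp only [hU, mem_setOf_eq]
    have := hxpos ⟨θ', hθ'⟩
    rw [hγ]
    linarith
  obtain ⟨F, hF⟩ := hScomp.elim_finite_subcover U hUopen hcover
  set pfn : S → ℝ := fun θ => ((P.map X1) (Metric.ball (xes θ) (γ θ / 2))).toReal with hpfn
  have hppos : ∀ θ : S, 0 < pfn θ := fun θ =>
    ball_pos P X1 hX _ (hxmem θ) _ (half_pos (hxpos θ))
  set B : Finset ℝ := insert (0 : ℝ) (F.image fun θ => -Real.log (pfn θ)) with hB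
  have hBne : (0:ℝ) ∈ B := Finset.mem_insert_self _ _
  set Creal : ℝ := B.max' ⟨0, hBne⟩ with hCreal
  have hC0 : (0:ℝ) ≤ Creal := Finset.le_max' _ _ hBne
  have hCi : ∀ θ ∈ F, -Real.log (pfn θ) ≤ Creal := by
    intro θ hθ
    rw [hCreal]
    refine Finset.le_max' B _ ?_
    rw [hB]
    exact Finset.mem_insert_of_mem (Finset.mem_image_of_mem _ hθ)
  have hbound : ∀ u : E2, ⟪u, v⟫ - cgfT P X1 u ≤ Creal := by
    intro u
    rw [hGproj u]
    set u' : E2 := u - (M.orthogonalProjection u : E2) with hu'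
    have hu'O : u' ∈ Mᗮ := Submodule.sub_starProjection_mem_orthogonal (K := M) u
    rcases eq_or_ne u' 0 with h0 | h0
    · rw [h0]
      have hlap1 : lapT P X1 0 = 1 := by
        unfold lapT
        simp [inner_zero_left, Real.exp_zero, measure_univ]
      have : cgfT P X1 0 = 0 := by
        unfold cgfT
        rw [hlap1, Real.log_one]
      rw [this]
      simpa using hC0
    · set θ' : E2 := ‖u'‖⁻¹ • u' with hθ'
      have hθ'S : θ' ∈ S := ⟨Submodule.smul_mem _ _ hu'O, norm_smul_inv_norm h0⟩
      have := hF hθ'S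
      rw [mem_iUnion₂] at this
      obtain ⟨θi, hθiF, hθiU⟩ := this
      simp only [hU, mem_setOf_eq] at hθiU
      have hu'θ : u' = ‖u'‖ • θ' := by
        rw [hθ', smul_smul, mul_inv_cancel₀ (norm_ne_zero_iff.2 h0), one_smul]
      have hip : ‖u'‖ * (γ θi / 2) ≤ ⟪u', xes θi - v⟫ := by
        conv_rhs => rw [hu'θ]
        rw [real_inner_smul_left]
        exact mul_le_mul_of_nonneg_left hθiU.le (norm_nonneg _)
      have hstep := cgf_restrict P X1 hX hLap u' (xes θi) (γ θi / 2)
        (half_pos (hxpos θi)) (hxmem θi)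
      have hlog := hCi θi hθiF
      rw [inner_sub_right] at hip
      linarith
  have hle : rateI P X1 v ≤ ENNReal.ofReal Creal :=
    iSup_le fun u => ENNReal.ofReal_le_ofReal (hbound u)
  exact lt_of_le_of_lt hle ENNReal.ofReal_lt_top

end Aux4

section Aux5
variable {Ω : Type*} [MeasurableSpace Ω] (P : Measure Ω) [IsProbabilityMeasure P]
  (X1 : Ω → E2)

lemma rateI_lsc : LowerSemicontinuous (rateI P X1) := by
  have h : ∀ u : E2, LowerSemicontinuous
      fun v : E2 => ENNReal.ofReal (⟪u, v⟫ - cgfT P X1 u) := by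
    intro u
    exact (ENNReal.continuous_ofReal.comp
      ((continuous_const.inner continuous_id).sub continuous_const)).lowerSemicontinuous
  exact lowerSemicontinuous_iSup h

lemma radMin_lsc : LowerSemicontinuous (radMin P X1) := by
  intro r₀ c hc
  rcases lt_or_ge r₀ 0 with h | h
  · filter_upwards [Iio_mem_nhds h] with r hr
    rw [radMin, if_pos (mem_Iio.1 hr)]
    exact lt_of_lt_of_le hc le_top
  · obtain ⟨c', hcc', hc'⟩ := exists_between hc
    have hkey : ∀ ℓ : E2, ‖ℓ‖ = 1 → c' < rateI P X1 (r₀ • ℓ) := fun ℓ hℓ =>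
      lt_of_lt_of_le hc' (radMin_le P X1 r₀ h hℓ)
    set F : ℝ × E2 → ℝ≥0∞ := fun p => rateI P X1 (p.1 • p.2) with hF
    have hlsc : LowerSemicontinuous F :=
      (rateI_lsc P X1).comp (continuous_fst.smul continuous_snd)
    set S : Set E2 := Metric.sphere 0 1 with hSdef
    have hdata : ∀ θ : S, ∃ (U : Set ℝ) (V : Set E2),
        IsOpen U ∧ IsOpen V ∧ r₀ ∈ U ∧ (θ : E2) ∈ V ∧
          ∀ r ∈ U, ∀ ℓ ∈ V, c' < F (r, ℓ) := by
      rintro ⟨θ, hθ⟩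
      have hθn : ‖θ‖ = 1 := mem_sphere_zero_iff_norm.1 hθ
      have hev : ∀ᶠ p in 𝓝 ((r₀, θ) : ℝ × E2), c' < F p :=
        hlsc (r₀, θ) c' (hkey θ hθn)
      rw [eventually_nhds_iff] at hev
      obtain ⟨W, hW, hWo, hWmem⟩ := hev
      obtain ⟨U, V, hUo, hVo, hrU, hθV, hUV⟩ := isOpen_prod_iff.1 hWo r₀ θ hWmem
      exact ⟨U, V, hUo, hVo, hrU, hθV, fun r hr ℓ hℓ => hW _ (hUV ⟨hr, hℓ⟩)⟩
    choose Uf Vf hUo hVo hrU hθV hFW using hdata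
    have hcover : S ⊆ ⋃ θ : S, Vf θ := fun θ hθ => mem_iUnion.2 ⟨⟨θ, hθ⟩, hθV _⟩
    obtain ⟨T, hT⟩ := (isCompact_sphere (0 : E2) 1).elim_finite_subcover Vf hVo hcover
    have hUopen : IsOpen (⋂ θ ∈ T, Uf θ) := isOpen_biInter_finset fun θ _ => hUo θ
    have hr₀U : r₀ ∈ ⋂ θ ∈ T, Uf θ := mem_iInter₂.2 fun θ _ => hrU θ
    filter_upwards [hUopen.mem_nhds hr₀U] with r hr
    rcases lt_or_ge r 0 with h2 | h2
    · rw [radMin, if_pos h2]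
      exact lt_of_lt_of_le hc le_top
    · refine lt_of_lt_of_le hcc' ?_
      rw [radMin_eq P X1 r h2]
      refine le_iInf₂ fun ℓ hℓ => ?_
      have hℓS : ℓ ∈ S := mem_sphere_zero_iff_norm.2 hℓ
      obtain ⟨θ, hθT, hℓV⟩ := mem_iUnion₂.1 (hT hℓS)
      have hrUθ : r ∈ Uf θ := mem_iInter₂.1 hr θ hθT
      exact (hFW θ r hrUθ ℓ hℓV).le

end Aux5



lemma ivt_norm (a b : E2) (r : ℝ) (h1 : ‖a‖ ≤ r) (h2 : r ≤ ‖b‖) :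
    ∃ s : ℝ, 0 ≤ s ∧ s ≤ 1 ∧ ‖(1 - s) • a + s • b‖ = r := by
  have hcont : ContinuousOn (fun s : ℝ => ‖(1 - s) • a + s • b‖) (Icc 0 1) :=
    (((continuous_const.sub continuous_id).smul continuous_const).add
      (continuous_id.smul continuous_const)).norm.continuousOn
  have hsub := intermediate_value_Icc (zero_le_one (α := ℝ)) hcont
  have h0 : ‖(1 - (0:ℝ)) • a + (0:ℝ) • b‖ = ‖a‖ := by simp
  have h1' : ‖(1 - (1:ℝ)) • a + (1:ℝ) • b‖ = ‖b‖ := by simp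
  have hr : r ∈ Icc ‖(1 - (0:ℝ)) • a + (0:ℝ) • b‖ ‖(1 - (1:ℝ)) • a + (1:ℝ) • b‖ := by
    rw [h0, h1']; exact ⟨h1, h2⟩
  obtain ⟨s, hs, hsr⟩ := hsub hr
  exact ⟨s, hs.1, hs.2, hsr⟩

section Main
variable {Ω : Type*} [MeasurableSpace Ω] (P : Measure Ω) [IsProbabilityMeasure P]
  (X1 : Ω → E2) (hX : Measurable X1)
  (hLap : ∀ u : E2, Integrable (fun ω => Real.exp ⟪u, X1 ω⟫) P)

lemma rmin_nonneg : 0 ≤ rmin P X1 :=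
  Real.sInf_nonneg fun y hy => by
    obtain ⟨x, _, rfl⟩ := hy; exact norm_nonneg x

include hX in
lemma msupp_nonempty : (msupp (P.map X1)).Nonempty := by
  by_contra hne
  rw [not_nonempty_iff_eq_empty] at hne
  have h1 := ae_mem_msupp P X1 hX
  rw [hne, ae_iff] at h1
  simp only [mem_empty_iff_false, not_false_eq_true] at h1
  simp [measure_univ] at h1

include hX hLap

/-- Finiteness of `radMin r₂` for `rmin ≤ r₁ < r₂ ≤ ‖μ‖` (used when `radMin r₁ = ⊤`). -/
lemma radMin_finite_left (r : ℝ) (hr0 : 0 ≤ r) (hrm : rmin P X1 < r)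
    (hrμ : r ≤ ‖meanv P X1‖) : radMin P X1 r < ⊤ := by
  set μ := meanv P X1
  have hne : ((norm '' (convexHull ℝ (msupp (P.map X1)))) : Set ℝ).Nonempty :=
    ((msupp_nonempty P X1 hX).mono (subset_convexHull ℝ _)).image _
  obtain ⟨n, hn, hnr⟩ := exists_lt_of_csInf_lt hne hrm
  obtain ⟨wpt, hwhull, rfl⟩ := hn
  obtain ⟨s, hs0, hs1, hsv⟩ := ivt_norm wpt μ r hnr.le hrμ
  have hspos : 0 < s := by
    rcases eq_or_lt_of_le hs0 with h | h
    · exfalso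
      rw [← h] at hsv
      simp only [sub_zero, one_smul, zero_smul, add_zero] at hsv
      exact absurd hsv hnr.ne
    · exact h
  set v := (1 - s) • wpt + s • μ with hv
  have hfin := rateI_lt_top P X1 hX hLap wpt hwhull s hspos hs1
  calc radMin P X1 r = radMin P X1 ‖v‖ := by rw [hsv]
    _ ≤ rateI P X1 v := radMin_le_rateI P X1 v
    _ < ⊤ := hfin

/-- Finiteness of `radMin r₁` for `‖μ‖ ≤ r₁` with `ofReal r₁ < rmaxE`. -/
lemma radMin_finite_right (r : ℝ) (hrμ : ‖meanv P X1‖ ≤ r)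
    (hrm : ENNReal.ofReal r < rmaxE P X1) : radMin P X1 r < ⊤ := by
  set μ := meanv P X1
  have hr0 : 0 ≤ r := le_trans (norm_nonneg μ) hrμ
  obtain ⟨y, hy⟩ : ∃ y : E2, ENNReal.ofReal r <
      ⨆ _ : y ∈ msupp (P.map X1), (‖y‖₊ : ℝ≥0∞) := lt_iSup_iff.1 hrm
  obtain ⟨hymem, hylt⟩ : ∃ _ : y ∈ msupp (P.map X1), ENNReal.ofReal r < (‖y‖₊ : ℝ≥0∞) :=
    lt_iSup_iff.1 hy
  have hry : r < ‖y‖ := by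
    rw [← enorm_eq_nnnorm, ← ofReal_norm] at hylt
    exact (ENNReal.ofReal_lt_ofReal_iff_of_nonneg hr0).1 hylt
  obtain ⟨s, hs0, hs1, hsv⟩ := ivt_norm μ y r hrμ hry.le
  have hslt : s < 1 := by
    rcases eq_or_lt_of_le hs1 with h | h
    · exfalso
      rw [h] at hsv
      simp only [sub_self, zero_smul, one_smul, zero_add] at hsv
      exact absurd hsv hry.ne'
    · exact h
  set v := (1 - s) • μ + s • y with hv
  have hyhull : y ∈ convexHull ℝ (msupp (P.map X1)) := subset_convexHull ℝ _ hymem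
  have hfin := rateI_lt_top P X1 hX hLap y hyhull (1 - s) (by linarith) (by linarith)
  have hveq : (1 - (1 - s)) • y + (1 - s) • μ = v := by
    rw [hv]; module
  rw [hveq] at hfin
  calc radMin P X1 r = radMin P X1 ‖v‖ := by rw [hsv]
    _ ≤ rateI P X1 v := radMin_le_rateI P X1 v
    _ < ⊤ := hfin

lemma radMin_strictAntiOn :
    StrictAntiOn (radMin P X1) (Set.Icc (rmin P X1) ‖meanv P X1‖) := by
  intro r1 h1 r2 h2 h12
  set μ := meanv P X1 with hμ
  have hr1_0 : 0 ≤ r1 := le_trans (rmin_nonneg P X1) h1.1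
  have hr2_0 : 0 ≤ r2 := le_trans hr1_0 h12.le
  have hr1μ : r1 < ‖μ‖ := lt_of_lt_of_le h12 h2.2
  rcases eq_top_or_lt_top (radMin P X1 r1) with htop | hfin
  · rw [htop]
    rcases eq_or_lt_of_le h2.2 with hr2μ | hr2μ
    · rw [hr2μ, radMin_mean P X1 hX hLap]
      exact ENNReal.zero_lt_top
    · exact radMin_finite_left P X1 hX hLap r2 hr2_0 (lt_of_le_of_lt h1.1 h12) hr2μ.le
  · have hpos : 0 < radMin P X1 r1 := radMin_pos P X1 hX hLap r1 hr1_0 hr1μ.ne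
    set cc : ℝ := 1 - (r2 - r1) / (‖μ‖ - r1) with hcc
    have hcclt : cc < 1 := by
      rw [hcc]
      have : 0 < (r2 - r1) / (‖μ‖ - r1) := div_pos (by linarith) (by linarith)
      linarith
    have hcc0 : 0 ≤ cc := by
      rw [hcc]
      have : (r2 - r1) / (‖μ‖ - r1) ≤ 1 := by
        rw [div_le_one (by linarith)]
        linarith [h2.2]
      linarith
    have hkey : radMin P X1 r2 ≤ ENNReal.ofReal cc * radMin P X1 r1 := by
      apply ENNReal.le_of_forall_pos_le_add
      intro ε hε _
      have happrox : radMin P X1 r1 < radMin P X1 r1 + ε :=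
        ENNReal.lt_add_right hfin.ne (by exact_mod_cast hε.ne')
      obtain ⟨v1, hv1n, hv1⟩ := exists_approx P X1 r1 hr1_0 _ happrox
      obtain ⟨s, hs0, hs1, hsv⟩ := ivt_norm v1 μ r2 (by rw [hv1n]; exact h12.le) h2.2
      set v := (1 - s) • v1 + s • μ with hv
      have hnormle : r2 ≤ (1 - s) * r1 + s * ‖μ‖ := by
        calc r2 = ‖v‖ := hsv.symm
          _ ≤ ‖(1 - s) • v1‖ + ‖s • μ‖ := norm_add_le _ _
          _ = (1 - s) * r1 + s * ‖μ‖ := by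
              rw [norm_smul, norm_smul, Real.norm_eq_abs, Real.norm_eq_abs,
                abs_of_nonneg (by linarith : (0:ℝ) ≤ 1 - s), abs_of_nonneg hs0, hv1n]
      have hscc : 1 - s ≤ cc := by
        rw [hcc]
        have h3 : (r2 - r1) / (‖μ‖ - r1) ≤ s := by
          rw [div_le_iff₀ (by linarith)]
          nlinarith
        linarith
      calc radMin P X1 r2 = radMin P X1 ‖v‖ := by rw [hsv]
        _ ≤ rateI P X1 v := radMin_le_rateI P X1 v
        _ ≤ ENNReal.ofReal (1 - s) * rateI P X1 v1 + ENNReal.ofReal s * rateI P X1 μ :=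
            rateI_segment P X1 v1 μ s hs0 hs1
        _ = ENNReal.ofReal (1 - s) * rateI P X1 v1 := by
            rw [rateI_mean P X1 hX hLap, mul_zero, add_zero]
        _ ≤ ENNReal.ofReal cc * (radMin P X1 r1 + ε) := by
            apply mul_le_mul' (ENNReal.ofReal_le_ofReal hscc) hv1.le
        _ = ENNReal.ofReal cc * radMin P X1 r1 + ENNReal.ofReal cc * ε := by
            rw [mul_add]
        _ ≤ ENNReal.ofReal cc * radMin P X1 r1 + ε := by
            apply add_le_add_right
            calc ENNReal.ofReal cc * ε ≤ 1 * ε := by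
                  apply mul_le_mul_left
                  exact ENNReal.ofReal_le_one.2 hcclt.le
              _ = ε := one_mul _
    calc radMin P X1 r2 ≤ ENNReal.ofReal cc * radMin P X1 r1 := hkey
      _ < 1 * radMin P X1 r1 := by
          rw [ENNReal.mul_lt_mul_iff_left hpos.ne' hfin.ne]
          exact ENNReal.ofReal_lt_one.2 hcclt
      _ = radMin P X1 r1 := one_mul _

lemma radMin_strictMonoOn :
    StrictMonoOn (radMin P X1)
      {r : ℝ | ‖meanv P X1‖ ≤ r ∧ ENNReal.ofReal r ≤ rmaxE P X1} := by
  intro r1 h1 r2 h2 h12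
  set μ := meanv P X1 with hμ
  have hr1_0 : 0 ≤ r1 := le_trans (norm_nonneg μ) h1.1
  have hr2_0 : 0 ≤ r2 := le_trans hr1_0 h12.le
  have hr2pos : 0 < r2 := lt_of_le_of_lt hr1_0 h12
  have hr2μ : ‖μ‖ < r2 := lt_of_le_of_lt h1.1 h12
  rcases eq_top_or_lt_top (radMin P X1 r2) with htop | hfin
  · rw [htop]
    have hr1max : ENNReal.ofReal r1 < rmaxE P X1 :=
      lt_of_lt_of_le (by
        exact (ENNReal.ofReal_lt_ofReal_iff_of_nonneg hr1_0).2 h12) h2.2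
    exact radMin_finite_right P X1 hX hLap r1 h1.1 hr1max
  · have hpos : 0 < radMin P X1 r2 := radMin_pos P X1 hX hLap r2 hr2_0 hr2μ.ne'
    set cc : ℝ := (r1 + ‖μ‖) / (r2 + ‖μ‖) with hcc
    have hccden : 0 < r2 + ‖μ‖ := by positivity
    have hcclt : cc < 1 := by
      rw [hcc, div_lt_one hccden]
      linarith
    have hcc0 : 0 ≤ cc := by
      rw [hcc]
      have : 0 ≤ r1 + ‖μ‖ := by positivity
      positivity
    have hkey : radMin P X1 r1 ≤ ENNReal.ofReal cc * radMin P X1 r2 := by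
      apply ENNReal.le_of_forall_pos_le_add
      intro ε hε _
      have happrox : radMin P X1 r2 < radMin P X1 r2 + ε :=
        ENNReal.lt_add_right hfin.ne (by exact_mod_cast hε.ne')
      obtain ⟨v2, hv2n, hv2⟩ := exists_approx P X1 r2 hr2_0 _ happrox
      obtain ⟨s, hs0, hs1, hsv⟩ := ivt_norm μ v2 r1 h1.1 (by rw [hv2n]; exact h12.le)
      set v := (1 - s) • μ + s • v2 with hv
      have hnormge : s * r2 ≤ r1 + (1 - s) * ‖μ‖ := by
        have h3 : s • v2 = v - (1 - s) • μ := by rw [hv]; module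
        calc s * r2 = ‖s • v2‖ := by
              rw [norm_smul, Real.norm_eq_abs, abs_of_nonneg hs0, hv2n]
          _ = ‖v - (1 - s) • μ‖ := by rw [h3]
          _ ≤ ‖v‖ + ‖(1 - s) • μ‖ := norm_sub_le _ _
          _ = r1 + (1 - s) * ‖μ‖ := by
              rw [hsv, norm_smul, Real.norm_eq_abs, abs_of_nonneg (by linarith : (0:ℝ) ≤ 1 - s)]
      have hscc : s ≤ cc := by
        rw [hcc, le_div_iff₀ hccden]
        nlinarith
      calc radMin P X1 r1 = radMin P X1 ‖v‖ := by rw [hsv]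
        _ ≤ rateI P X1 v := radMin_le_rateI P X1 v
        _ ≤ ENNReal.ofReal (1 - s) * rateI P X1 μ + ENNReal.ofReal s * rateI P X1 v2 :=
            rateI_segment P X1 μ v2 s hs0 hs1
        _ = ENNReal.ofReal s * rateI P X1 v2 := by
            rw [rateI_mean P X1 hX hLap, mul_zero, zero_add]
        _ ≤ ENNReal.ofReal cc * (radMin P X1 r2 + ε) := by
            apply mul_le_mul' (ENNReal.ofReal_le_ofReal hscc) hv2.le
        _ = ENNReal.ofReal cc * radMin P X1 r2 + ENNReal.ofReal cc * ε := by
            rw [mul_add]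
        _ ≤ ENNReal.ofReal cc * radMin P X1 r2 + ε := by
            apply add_le_add_right
            calc ENNReal.ofReal cc * ε ≤ 1 * ε := by
                  apply mul_le_mul_left
                  exact ENNReal.ofReal_le_one.2 hcclt.le
              _ = ε := one_mul _
    calc radMin P X1 r1 ≤ ENNReal.ofReal cc * radMin P X1 r2 := hkey
      _ < 1 * radMin P X1 r2 := by
          rw [ENNReal.mul_lt_mul_iff_left hpos.ne' hfin.ne]
          exact ENNReal.ofReal_lt_one.2 hcclt
      _ = radMin P X1 r2 := one_mul _

end Main


section Conv
variable {Ω : Type*} [MeasurableSpace Ω] (P : Measure Ω) [IsProbabilityMeasure P]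
  (X1 : Ω → E2) (hX : Measurable X1)
  (hLap : ∀ u : E2, Integrable (fun ω => Real.exp ⟪u, X1 ω⟫) P)

include hX hLap in
lemma radMin_convexOn :
    ENNConvexOn (Set.Icc (rmin P X1) ‖meanv P X1‖) (radMin P X1) := by
  intro x hx y hy a b hab
  set μ := meanv P X1 with hμ
  have hx0 : 0 ≤ x := le_trans (rmin_nonneg P X1) hx.1
  have hy0 : 0 ≤ y := le_trans (rmin_nonneg P X1) hy.1
  have habR : (a : ℝ) + (b : ℝ) = 1 := by exact_mod_cast congrArg NNReal.toReal hab
  rcases eq_or_ne a 0 with ha0 | ha0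
  · subst ha0
    have hb1 : b = 1 := by simpa using hab
    subst hb1
    simp
  rcases eq_or_ne b 0 with hb0 | hb0
  · subst hb0
    have ha1 : a = 1 := by simpa using hab
    subst ha1
    simp
  rcases eq_top_or_lt_top (radMin P X1 x) with hxt | hxf
  · rw [hxt, ENNReal.mul_top (show (a : ℝ≥0∞) ≠ 0 by exact_mod_cast ha0), top_add]
    exact le_top
  rcases eq_top_or_lt_top (radMin P X1 y) with hyt | hyf
  · rw [hyt, ENNReal.mul_top (show (b : ℝ≥0∞) ≠ 0 by exact_mod_cast hb0), add_top]
    exact le_top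
  set z := (a : ℝ) * x + (b : ℝ) * y with hz
  have hz0 : 0 ≤ z := by positivity
  have hzμ : z ≤ ‖μ‖ := by
    calc (a : ℝ) * x + (b : ℝ) * y ≤ (a : ℝ) * ‖μ‖ + (b : ℝ) * ‖μ‖ :=
          add_le_add (mul_le_mul_of_nonneg_left hx.2 a.coe_nonneg)
            (mul_le_mul_of_nonneg_left hy.2 b.coe_nonneg)
      _ = ‖μ‖ := by rw [← add_mul, habR, one_mul]
  apply ENNReal.le_of_forall_pos_le_add
  intro ε hε _
  have hεne : (ε : ℝ≥0∞) ≠ 0 := by exact_mod_cast hε.ne'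
  obtain ⟨vx, hvxn, hvx⟩ := exists_approx P X1 x hx0 _ (ENNReal.lt_add_right hxf.ne hεne)
  obtain ⟨vy, hvyn, hvy⟩ := exists_approx P X1 y hy0 _ (ENNReal.lt_add_right hyf.ne hεne)
  set v := (a : ℝ) • vx + (b : ℝ) • vy with hv
  have hvn : ‖v‖ ≤ z := by
    calc ‖v‖ ≤ ‖(a : ℝ) • vx‖ + ‖(b : ℝ) • vy‖ := norm_add_le _ _
      _ = (a : ℝ) * x + (b : ℝ) * y := by
          rw [norm_smul, norm_smul, Real.norm_eq_abs, Real.norm_eq_abs,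
            abs_of_nonneg a.coe_nonneg, abs_of_nonneg b.coe_nonneg, hvxn, hvyn]
  have hb1R : (b : ℝ) ≤ 1 := by linarith [a.coe_nonneg]
  have hseg : rateI P X1 v ≤ (a : ℝ≥0∞) * rateI P X1 vx + (b : ℝ≥0∞) * rateI P X1 vy := by
    have h1b : (1 : ℝ) - (b : ℝ) = (a : ℝ) := by linarith
    have h2 := rateI_segment P X1 vx vy (b : ℝ) b.coe_nonneg hb1R
    rw [h1b, ENNReal.ofReal_coe_nnreal, ENNReal.ofReal_coe_nnreal] at h2
    exact h2
  obtain ⟨s, hs0, hs1, hsv⟩ := ivt_norm v μ z hvn hzμ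
  have h5 : rateI P X1 ((1 - s) • v + s • μ) ≤ rateI P X1 v := by
    calc rateI P X1 ((1 - s) • v + s • μ)
        ≤ ENNReal.ofReal (1 - s) * rateI P X1 v + ENNReal.ofReal s * rateI P X1 μ :=
          rateI_segment P X1 v μ s hs0 hs1
      _ = ENNReal.ofReal (1 - s) * rateI P X1 v := by
          rw [rateI_mean P X1 hX hLap, mul_zero, add_zero]
      _ ≤ 1 * rateI P X1 v := mul_le_mul_left (ENNReal.ofReal_le_one.2 (by linarith)) _
      _ = rateI P X1 v := one_mul _
  have hab' : (a : ℝ≥0∞) + (b : ℝ≥0∞) = 1 := by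
    rw [← ENNReal.coe_add, hab, ENNReal.coe_one]
  calc radMin P X1 z = radMin P X1 ‖(1 - s) • v + s • μ‖ := by rw [hsv]
    _ ≤ rateI P X1 ((1 - s) • v + s • μ) := radMin_le_rateI P X1 _
    _ ≤ rateI P X1 v := h5
    _ ≤ (a : ℝ≥0∞) * rateI P X1 vx + (b : ℝ≥0∞) * rateI P X1 vy := hseg
    _ ≤ (a : ℝ≥0∞) * (radMin P X1 x + ε) + (b : ℝ≥0∞) * (radMin P X1 y + ε) :=
        add_le_add (mul_le_mul_right hvx.le _) (mul_le_mul_right hvy.le _)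
    _ = ((a : ℝ≥0∞) * radMin P X1 x + (b : ℝ≥0∞) * radMin P X1 y)
          + ((a : ℝ≥0∞) + (b : ℝ≥0∞)) * ε := by ring
    _ = (a : ℝ≥0∞) * radMin P X1 x + (b : ℝ≥0∞) * radMin P X1 y + ε := by
        rw [hab', one_mul]

end Conv



/-- The radial minimum function `ubar I` is lower semi-continuous on `ℝ`,
satisfies `ubar I(|μ|) = 0`, is strictly decreasing and convex on `[r_min, |μ|]`, and is
strictly increasing on `[|μ|, r_max]` (meaning `[|μ|, ∞)` if `r_max = ∞`; the condition
`r ≤ r_max` is expressed as `ENNReal.ofReal r ≤ rmaxE`). -/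
theorem radMin_basic_properties
    {Ω : Type*} [MeasurableSpace Ω] (P : Measure Ω) [IsProbabilityMeasure P]
    (X1 : Ω → E2) (hX : Measurable X1)
    (hLap : ∀ u : E2, Integrable (fun ω => Real.exp ⟪u, X1 ω⟫) P) :
    LowerSemicontinuous (radMin P X1) ∧
      radMin P X1 ‖meanv P X1‖ = 0 ∧
      StrictAntiOn (radMin P X1) (Set.Icc (rmin P X1) ‖meanv P X1‖) ∧
      ENNConvexOn (Set.Icc (rmin P X1) ‖meanv P X1‖) (radMin P X1) ∧
      StrictMonoOn (radMin P X1)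
        {r : ℝ | ‖meanv P X1‖ ≤ r ∧ ENNReal.ofReal r ≤ rmaxE P X1} := by
  exact ⟨radMin_lsc P X1, radMin_mean P X1 hX hLap, radMin_strictAntiOn P X1 hX hLap,
    radMin_convexOn P X1 hX hLap, radMin_strictMonoOn P X1 hX hLap⟩

end
end
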